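/- arXiv:1810.08792 — 3 statements merged into one kernel-verified Lean document; each statement's English description precedes it below -/
import Mathlib

section
/- For every integer k ≥ 0, the subgraph C_k of complete lines of the Sierpiński graph Γ_k has exactly 2·6^k − 4^k vertices. -/
open scoped Classical

/-- Reachability within the subgraph of `X` induced on a vertex set `s`. -/
def SimpleGraph.ReachIn {V : Type*} (X : SimpleGraph V) (s : Set V) (v w : V) : Prop :=
  ∃ (hv : v ∈ s) (hw : w ∈ s), (X.induce s).Reachable ⟨v, hv⟩ ⟨w, hw⟩

/-- The vertex set of the connected component of `v` in the subgraph of `X` induced on `s`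
(empty if `v ∉ s`). -/
def SimpleGraph.compIn {V : Type*} (X : SimpleGraph V) (s : Set V) (v : V) : Set V :=
  {w | X.ReachIn s v w}

/-- `T` is a vertex set witnessing `cut¹ᐟ²` for the subgraph of `X` induced on the finite
vertex set `G`: after removing `T` from `G`, every connected component has at most
`|G|/2` vertices. -/
def IsHalfCutSet {V : Type*} (X : SimpleGraph V) (G T : Finset V) : Prop :=
  T ⊆ G ∧ ∀ v : V, 2 * (X.compIn (↑(G \ T)) v).ncard ≤ G.card

/-- `cut¹ᐟ²` of the subgraph of `X` induced on the finite vertex set `G`: the least size of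
a vertex set whose removal leaves all connected components of size at most `|G|/2`. -/
noncomputable def cutHalf {V : Type*} (X : SimpleGraph V) (G : Finset V) : ℕ :=
  sInf {t | ∃ T : Finset V, IsHalfCutSet X G T ∧ T.card = t}

/-- The `1/2`-separation profile of `X`, over finite subgraphs with vertex set inside `W`. -/
noncomputable def sepHalf {V : Type*} (X : SimpleGraph V) (W : Set V) (n : ℕ) : ℕ :=
  sSup {c | ∃ G : Finset V, ↑G ⊆ W ∧ G.card ≤ n ∧ c = cutHalf X G}

/-- The `i`-th digit of `x` in base `b`. -/
def digit (b i x : ℕ) : ℕ := x / b ^ i % b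

/-- Membership in the vertex set of the infinite Sierpinski graph: no position at which
both coordinates have base-3 digit `1`. -/
def SierpMem (p : ℕ × ℕ) : Prop :=
  ∀ i : ℕ, ¬(digit 3 i p.1 = 1 ∧ digit 3 i p.2 = 1)

/-- The infinite Sierpinski graph `S`, with edges between valid points at `ℓ¹`-distance 1. -/
def SierpGraph : SimpleGraph (ℕ × ℕ) where
  Adj p q := SierpMem p ∧ SierpMem q ∧ |(p.1 : ℤ) - q.1| + |(p.2 : ℤ) - q.2| = 1
  symm := by
    constructor
    rintro p q ⟨hp, hq, h⟩
    exact ⟨hq, hp, by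
      rw [abs_sub_comm (q.1 : ℤ) (p.1 : ℤ), abs_sub_comm (q.2 : ℤ) (p.2 : ℤ)]; exact h⟩
  loopless := by constructor; rintro p ⟨-, -, h⟩; simp at h

/-- The vertex set of the sphere `Γ_k`. -/
noncomputable def GammaV (k : ℕ) : Finset (ℕ × ℕ) :=
  (Finset.range (3 ^ k) ×ˢ Finset.range (3 ^ k)).filter SierpMem

/-- The intersection of the vertical line `V_x` with `Γ_k`. -/
def VlineSet (k x : ℕ) : Set (ℕ × ℕ) := {p | p ∈ GammaV k ∧ p.1 = x}

/-- The intersection of the horizontal line `H_y` with `Γ_k`. -/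
def HlineSet (k y : ℕ) : Set (ℕ × ℕ) := {p | p ∈ GammaV k ∧ p.2 = y}

/-- The vertical line `V_x` is complete in `Γ_k`: its intersection with `Γ_k` is connected. -/
def CompleteV (k x : ℕ) : Prop := (SierpGraph.induce (VlineSet k x)).Connected

/-- The horizontal line `H_y` is complete in `Γ_k`: its intersection with `Γ_k` is connected. -/
def CompleteH (k y : ℕ) : Prop := (SierpGraph.induce (HlineSet k y)).Connected

/-- The vertex set of the complete-lines subgraph `C_k` of `Γ_k`. -/
noncomputable def CkV (k : ℕ) : Finset (ℕ × ℕ) :=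
  (GammaV k).filter fun p => CompleteV k p.1 ∨ CompleteH k p.2

def DGood (x : ℕ) : Prop := ∀ i, digit 3 i x ≠ 1

lemma digit_zero (b i : ℕ) : digit b i 0 = 0 := by simp [digit]

lemma digit_zero' (x : ℕ) : digit 3 0 x = x % 3 := by simp [digit]

lemma digit_succ (i x : ℕ) : digit 3 (i+1) x = digit 3 i (x / 3) := by
  simp [digit, Nat.div_div_eq_div_mul, pow_succ, mul_comm]

lemma dgood_iff (x : ℕ) : DGood x ↔ x % 3 ≠ 1 ∧ DGood (x / 3) := by
  constructor
  · intro h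
    refine ⟨by simpa [digit_zero'] using h 0, fun i => by simpa [digit_succ] using h (i+1)⟩
  · rintro ⟨h0, h⟩ i
    cases i with
    | zero => simpa [digit_zero']
    | succ n => rw [digit_succ]; exact h n

lemma lt_of_digit_eq_one {i x k : ℕ} (hx : x < 3 ^ k) (h : digit 3 i x = 1) : i < k := by
  by_contra hik
  push_neg at hik
  have : x < 3 ^ i := lt_of_lt_of_le hx (Nat.pow_le_pow_right (by norm_num) hik)
  simp [digit, Nat.div_eq_of_lt this] at h

lemma digit_two_pow (i j : ℕ) : digit 3 j (2 * 3 ^ i) = if j = i then 2 else 0 := by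
  rcases Nat.lt_trichotomy j i with h | h | h
  · obtain ⟨m, hm⟩ := Nat.exists_eq_add_of_lt h
    subst hm
    have h3 : 2 * 3 ^ (j + m + 1) = 3 ^ j * (2 * (3 ^ m * 3)) := by ring
    have h4 : 2 * 3 ^ (j + m + 1) / 3 ^ j = 2 * (3 ^ m * 3) := by
      rw [h3, Nat.mul_div_cancel_left _ (Nat.pow_pos (n := _) (by norm_num))]
    simp only [digit, h4, if_neg (by omega : ¬ j = j + m + 1)]
    omega
  · subst h
    simp [digit, Nat.mul_div_cancel _ (Nat.pow_pos (n := _) (by norm_num : (0:ℕ) < 3))]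
  · have h2 : 2 * 3 ^ i < 3 ^ j := by
      calc 2 * 3 ^ i < 3 * 3 ^ i := by have := Nat.pow_pos (n := i) (by norm_num : 0 < 3); omega
      _ = 3 ^ (i + 1) := by ring
      _ ≤ 3 ^ j := Nat.pow_le_pow_right (by norm_num) h
    simp [digit, Nat.div_eq_of_lt h2, Nat.ne_of_gt h]

lemma card_dgood (k : ℕ) : ((Finset.range (3 ^ k)).filter DGood).card = 2 ^ k := by
  induction k with
  | zero =>
    simp only [pow_zero, Finset.range_one, Finset.filter_singleton]
    rw [if_pos (show DGood 0 from fun i => by rw [digit_zero]; norm_num)]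
    simp
  | succ k ih =>
    rw [pow_succ]
    have : ((Finset.range (3 ^ k * 3)).filter DGood).card
        = ((({0, 2} : Finset ℕ)) ×ˢ ((Finset.range (3 ^ k)).filter DGood)).card := by
      apply Finset.card_nbij' (fun x => (x % 3, x / 3)) (fun p => p.1 + 3 * p.2)
      · intro x hx
        simp only [Finset.mem_coe, Finset.mem_filter, Finset.mem_range] at hx
        obtain ⟨hlt, hg⟩ := hx
        rw [dgood_iff] at hg
        simp only [Finset.mem_coe, Finset.mem_product, Finset.mem_insert, Finset.mem_singleton,
          Finset.mem_filter, Finset.mem_range]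
        refine ⟨by omega, Nat.div_lt_of_lt_mul (by omega), hg.2⟩
      · intro p hp
        simp only [Finset.mem_coe, Finset.mem_product, Finset.mem_insert, Finset.mem_singleton,
          Finset.mem_filter, Finset.mem_range] at hp
        obtain ⟨h1, h2, h3⟩ := hp
        simp only [Finset.mem_coe, Finset.mem_filter, Finset.mem_range]
        refine ⟨by omega, ?_⟩
        rw [dgood_iff]
        refine ⟨by omega, ?_⟩
        have : (p.1 + 3 * p.2) / 3 = p.2 := by omega
        rw [this]; exact h3
      · intro x _; simp; omega
      · intro p hp
        simp only [Finset.mem_coe, Finset.mem_product, Finset.mem_insert, Finset.mem_singleton,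
          Finset.mem_filter, Finset.mem_range] at hp
        have h1 : p.1 = 0 ∨ p.1 = 2 := hp.1
        have : (p.1 + 3 * p.2) % 3 = p.1 := by omega
        have h2 : (p.1 + 3 * p.2) / 3 = p.2 := by omega
        exact Prod.ext this h2
    rw [this, Finset.card_product, Finset.card_insert_of_notMem (by simp), Finset.card_singleton, ih]
    ring





lemma digit_pow_self (i : ℕ) : digit 3 i (3 ^ i) = 1 := by
  simp [digit, Nat.div_self (Nat.pow_pos (n := i) (by norm_num : (0:ℕ) < 3))]



lemma mem_GammaV {k : ℕ} {p : ℕ × ℕ} :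
    p ∈ GammaV k ↔ p.1 < 3 ^ k ∧ p.2 < 3 ^ k ∧ SierpMem p := by
  simp [GammaV, Finset.mem_filter, Finset.mem_product, and_assoc]

lemma sierpMem_of_dgood_left {x y : ℕ} (h : DGood x) : SierpMem (x, y) :=
  fun i hi => h i hi.1

lemma sierpMem_of_dgood_right {x y : ℕ} (h : DGood y) : SierpMem (x, y) :=
  fun i hi => h i hi.2

lemma walk_inv {V : Type*} {G : SimpleGraph V} (P : V → Prop)
    (hP : ∀ u v, G.Adj u v → P u → P v) {a b : V} (h : G.Reachable a b) (ha : P a) : P b := by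
  obtain ⟨w⟩ := h
  induction w with
  | nil => exact ha
  | cons h' p ih => exact ih (hP _ _ h' ha)

-- the key characterization: CompleteV
lemma completeV_iff (k x : ℕ) : CompleteV k x ↔ x < 3 ^ k ∧ DGood x := by
  constructor
  · intro hc
    obtain ⟨⟨v, hv⟩⟩ := hc.nonempty
    have hx : x < 3 ^ k := by
      have := (mem_GammaV.mp hv.1).1
      rwa [hv.2] at this
    refine ⟨hx, ?_⟩
    by_contra hbad
    simp only [DGood, not_forall, not_ne_iff] at hbad
    obtain ⟨i, hi⟩ := hbad
    have hik : i < k := lt_of_digit_eq_one hx hi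
    have hlt : 2 * 3 ^ i < 3 ^ k := by
      calc 2 * 3 ^ i < 3 * 3 ^ i := by
            have := Nat.pow_pos (n := i) (by norm_num : 0 < 3); omega
      _ = 3 ^ (i + 1) := by ring
      _ ≤ 3 ^ k := Nat.pow_le_pow_right (by norm_num) hik
    have ha : ((x, 0) : ℕ × ℕ) ∈ VlineSet k x := by
      refine ⟨mem_GammaV.mpr ⟨hx, Nat.pow_pos (n := k) (by norm_num), ?_⟩, rfl⟩
      exact fun j hj => by simp [digit_zero] at hj
    have hb : ((x, 2 * 3 ^ i) : ℕ × ℕ) ∈ VlineSet k x := by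
      refine ⟨mem_GammaV.mpr ⟨hx, hlt, ?_⟩, rfl⟩
      intro j hj
      rw [digit_two_pow] at hj
      rcases hj with ⟨-, hj2⟩
      split at hj2 <;> omega
    have hreach := hc.preconnected ⟨(x, 0), ha⟩ ⟨(x, 2 * 3 ^ i), hb⟩
    have hinv := walk_inv (G := SierpGraph.induce (VlineSet k x))
      (fun v => v.1.2 < 3 ^ i) ?_ hreach (Nat.pow_pos (n := i) (by norm_num))
    · simp only at hinv; omega
    · rintro ⟨u, hu⟩ ⟨v, hv'⟩ hadj hult
      obtain ⟨-, -, habs⟩ : SierpGraph.Adj u v := hadj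
      have hu1 : u.1 = x := hu.2
      have hv1 : v.1 = x := hv'.2
      rw [hu1, hv1] at habs
      simp only [sub_self, abs_zero, zero_add] at habs
      have hstep : v.2 = u.2 + 1 ∨ u.2 = v.2 + 1 := by
        rcases abs_cases ((u.2 : ℤ) - v.2) with ⟨h1, -⟩ | ⟨h1, -⟩ <;> rw [h1] at habs <;> omega
      by_contra hge
      push_neg at hge
      have hult' : u.2 < 3 ^ i := hult
      have hge' : 3 ^ i ≤ v.2 := hge
      have hv2 : v.2 = 3 ^ i := by omega
      have hsm : SierpMem v := (mem_GammaV.mp hv'.1).2.2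
      exact hsm i ⟨by rwa [hv1], by rw [hv2]; exact digit_pow_self i⟩
  · rintro ⟨hx, hg⟩
    have hmem : ∀ y, y < 3 ^ k → ((x, y) : ℕ × ℕ) ∈ VlineSet k x := fun y hy =>
      ⟨mem_GammaV.mpr ⟨hx, hy, sierpMem_of_dgood_left hg⟩, rfl⟩
    have h0 : ((x, 0) : ℕ × ℕ) ∈ VlineSet k x := hmem 0 (Nat.pow_pos (n := k) (by norm_num))
    have reach0 : ∀ y (hy : y < 3 ^ k),
        (SierpGraph.induce (VlineSet k x)).Reachable ⟨(x, 0), h0⟩ ⟨(x, y), hmem y hy⟩ := by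
      intro y
      induction y with
      | zero => intro _; rfl
      | succ n ih =>
        intro hy
        have hn : n < 3 ^ k := by omega
        refine (ih hn).trans (SimpleGraph.Adj.reachable ?_)
        show SierpGraph.Adj (x, n) (x, n + 1)
        refine ⟨sierpMem_of_dgood_left hg, sierpMem_of_dgood_left hg, ?_⟩
        simp only [sub_self, abs_zero, zero_add]
        push_cast
        rw [show ((n : ℤ) - (n + 1)) = -1 by ring]
        simp
    haveI : Nonempty ↥(VlineSet k x) := ⟨⟨(x, 0), h0⟩⟩
    constructor
    rintro ⟨⟨u1, u2⟩, hu⟩ ⟨⟨v1, v2⟩, hv⟩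
    · have hu1 : u1 = x := hu.2
      have hv1 : v1 = x := hv.2
      have hu2 : u2 < 3 ^ k := (mem_GammaV.mp hu.1).2.1
      have hv2 : v2 < 3 ^ k := (mem_GammaV.mp hv.1).2.1
      subst hu1 hv1
      exact (reach0 u2 hu2).symm.trans (reach0 v2 hv2)

lemma completeH_iff (k y : ℕ) : CompleteH k y ↔ y < 3 ^ k ∧ DGood y := by
  constructor
  · intro hc
    obtain ⟨⟨v, hv⟩⟩ := hc.nonempty
    have hx : y < 3 ^ k := by
      have := (mem_GammaV.mp hv.1).2.1
      rwa [hv.2] at this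
    refine ⟨hx, ?_⟩
    by_contra hbad
    simp only [DGood, not_forall, not_ne_iff] at hbad
    obtain ⟨i, hi⟩ := hbad
    have hik : i < k := lt_of_digit_eq_one hx hi
    have hlt : 2 * 3 ^ i < 3 ^ k := by
      calc 2 * 3 ^ i < 3 * 3 ^ i := by
            have := Nat.pow_pos (n := i) (by norm_num : 0 < 3); omega
      _ = 3 ^ (i + 1) := by ring
      _ ≤ 3 ^ k := Nat.pow_le_pow_right (by norm_num) hik
    have ha : ((0, y) : ℕ × ℕ) ∈ HlineSet k y := by
      refine ⟨mem_GammaV.mpr ⟨Nat.pow_pos (n := k) (by norm_num), hx, ?_⟩, rfl⟩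
      exact fun j hj => by simp [digit_zero] at hj
    have hb : ((2 * 3 ^ i, y) : ℕ × ℕ) ∈ HlineSet k y := by
      refine ⟨mem_GammaV.mpr ⟨hlt, hx, ?_⟩, rfl⟩
      intro j hj
      rw [digit_two_pow] at hj
      rcases hj with ⟨hj2, -⟩
      split at hj2 <;> omega
    have hreach := hc.preconnected ⟨(0, y), ha⟩ ⟨(2 * 3 ^ i, y), hb⟩
    have hinv := walk_inv (G := SierpGraph.induce (HlineSet k y))
      (fun v => v.1.1 < 3 ^ i) ?_ hreach (Nat.pow_pos (n := i) (by norm_num))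
    · simp only at hinv; omega
    · rintro ⟨u, hu⟩ ⟨v, hv'⟩ hadj hult
      obtain ⟨-, -, habs⟩ : SierpGraph.Adj u v := hadj
      have hu1 : u.2 = y := hu.2
      have hv1 : v.2 = y := hv'.2
      rw [hu1, hv1] at habs
      simp only [sub_self, abs_zero, add_zero] at habs
      have hstep : v.1 = u.1 + 1 ∨ u.1 = v.1 + 1 := by
        rcases abs_cases ((u.1 : ℤ) - v.1) with ⟨h1, -⟩ | ⟨h1, -⟩ <;> rw [h1] at habs <;> omega
      by_contra hge
      push_neg at hge
      have hult' : u.1 < 3 ^ i := hult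
      have hge' : 3 ^ i ≤ v.1 := hge
      have hv2 : v.1 = 3 ^ i := by omega
      have hsm : SierpMem v := (mem_GammaV.mp hv'.1).2.2
      exact hsm i ⟨by rw [hv2]; exact digit_pow_self i, by rwa [hv1]⟩
  · rintro ⟨hx, hg⟩
    have hmem : ∀ z, z < 3 ^ k → ((z, y) : ℕ × ℕ) ∈ HlineSet k y := fun z hz =>
      ⟨mem_GammaV.mpr ⟨hz, hx, sierpMem_of_dgood_right hg⟩, rfl⟩
    have h0 : ((0, y) : ℕ × ℕ) ∈ HlineSet k y := hmem 0 (Nat.pow_pos (n := k) (by norm_num))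
    have reach0 : ∀ z (hz : z < 3 ^ k),
        (SierpGraph.induce (HlineSet k y)).Reachable ⟨(0, y), h0⟩ ⟨(z, y), hmem z hz⟩ := by
      intro z
      induction z with
      | zero => intro _; rfl
      | succ n ih =>
        intro hz
        have hn : n < 3 ^ k := by omega
        refine (ih hn).trans (SimpleGraph.Adj.reachable ?_)
        show SierpGraph.Adj (n, y) (n + 1, y)
        refine ⟨sierpMem_of_dgood_right hg, sierpMem_of_dgood_right hg, ?_⟩
        simp only [sub_self, abs_zero, add_zero]
        push_cast
        rw [show ((n : ℤ) - (n + 1)) = -1 by ring]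
        simp
    haveI : Nonempty ↥(HlineSet k y) := ⟨⟨(0, y), h0⟩⟩
    constructor
    rintro ⟨⟨u1, u2⟩, hu⟩ ⟨⟨v1, v2⟩, hv⟩
    · have hu2 : u2 = y := hu.2
      have hv2 : v2 = y := hv.2
      have hu1 : u1 < 3 ^ k := (mem_GammaV.mp hu.1).1
      have hv1 : v1 < 3 ^ k := (mem_GammaV.mp hv.1).1
      subst hu2 hv2
      exact (reach0 u1 hu1).symm.trans (reach0 v1 hv1)


/-- The complete-lines subgraph `C_k` of `Γ_k` has exactly `2·6^k − 4^k` vertices. -/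
theorem card_CkV (k : ℕ) : (CkV k).card = 2 * 6 ^ k - 4 ^ k := by
  classical
  set A : Finset ℕ := (Finset.range (3 ^ k)).filter DGood with hA
  set R : Finset ℕ := Finset.range (3 ^ k) with hR
  have hAsub : ∀ x ∈ A, x < 3 ^ k := fun x hx => Finset.mem_range.mp (Finset.mem_of_mem_filter x hx)
  have hCk : CkV k = (A ×ˢ R) ∪ (R ×ˢ A) := by
    ext p
    obtain ⟨a, b⟩ := p
    simp only [CkV, Finset.mem_filter, mem_GammaV, completeV_iff, completeH_iff,
      Finset.mem_union, Finset.mem_product, hA, hR, Finset.mem_range]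
    constructor
    · rintro ⟨⟨h1, h2, -⟩, h3 | h3⟩
      · exact Or.inl ⟨⟨h1, h3.2⟩, h2⟩
      · exact Or.inr ⟨h1, h2, h3.2⟩
    · rintro (⟨⟨h1, hg⟩, h2⟩ | ⟨h1, h2, hg⟩)
      · exact ⟨⟨h1, h2, sierpMem_of_dgood_left hg⟩, Or.inl ⟨h1, hg⟩⟩
      · exact ⟨⟨h1, h2, sierpMem_of_dgood_right hg⟩, Or.inr ⟨h2, hg⟩⟩
  have hinter : (A ×ˢ R) ∩ (R ×ˢ A) = A ×ˢ A := by
    ext p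
    simp only [Finset.mem_inter, Finset.mem_product]
    constructor
    · rintro ⟨⟨h1, -⟩, ⟨-, h2⟩⟩; exact ⟨h1, h2⟩
    · rintro ⟨h1, h2⟩
      exact ⟨⟨h1, Finset.mem_range.mpr (hAsub _ h2)⟩, Finset.mem_range.mpr (hAsub _ h1), h2⟩
  have hU := Finset.card_union_add_card_inter (A ×ˢ R) (R ×ˢ A)
  rw [hinter] at hU
  rw [hCk]
  have hcA : A.card = 2 ^ k := card_dgood k
  have hcR : R.card = 3 ^ k := Finset.card_range _
  rw [Finset.card_product, Finset.card_product, Finset.card_product, hcA, hcR] at hU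
  have h6 : (6 : ℕ) ^ k = 2 ^ k * 3 ^ k := by rw [← Nat.mul_pow]
  have h4 : (4 : ℕ) ^ k = 2 ^ k * 2 ^ k := by rw [← Nat.mul_pow]
  rw [h6, h4]
  rw [Nat.mul_comm (3 ^ k) (2 ^ k)] at hU
  omega
end

section
/- Let Γ be a finite subgraph of the infinite Sierpiński graph S on q·6^k + r vertices, where 0 ≤ q < 6 and 0 ≤ r < 6^k. Then there exists a set T of vertices of Γ with |T| ≤ 24·2^k such that Γ − T has at most one connected component with more than |Γ|/2 vertices, and any such component is contained in a square of side length 3^k (i.e. in a set of the form [a, a+3^k] × [c, c+3^k]). -/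
open scoped Classical

-- auxiliary lemmas

private lemma reachIn_symm {s : Set (ℕ × ℕ)} {v w : ℕ × ℕ}
    (h : SierpGraph.ReachIn s v w) : SierpGraph.ReachIn s w v := by
  obtain ⟨hv, hw, hr⟩ := h; exact ⟨hw, hv, hr.symm⟩

private lemma reachIn_trans {s : Set (ℕ × ℕ)} {u v w : ℕ × ℕ}
    (h1 : SierpGraph.ReachIn s u v) (h2 : SierpGraph.ReachIn s v w) :
    SierpGraph.ReachIn s u w := by
  obtain ⟨hu, hv, hr1⟩ := h1; obtain ⟨hv', hw, hr2⟩ := h2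
  exact ⟨hu, hw, hr1.trans hr2⟩

private lemma adj_abs {p q : ℕ × ℕ} (h : SierpGraph.Adj p q) :
    |(p.1 : ℤ) - q.1| ≤ 1 ∧ |(p.2 : ℤ) - q.2| ≤ 1 := by
  obtain ⟨-, -, h⟩ := h
  constructor
  · linarith [abs_nonneg ((p.2 : ℤ) - q.2)]
  · linarith [abs_nonneg ((p.1 : ℤ) - q.1)]

private lemma walk_ivt {s : Set (ℕ × ℕ)} (f : ℕ × ℕ → ℤ)
    (hf : ∀ p q : ℕ × ℕ, SierpGraph.Adj p q → |f p - f q| ≤ 1) (t : ℤ) :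
    ∀ {a b : s}, (SierpGraph.induce s).Walk a b →
      f a ≤ t → t ≤ f b → ∃ u ∈ s, f u = t := by
  intro a b w
  induction w with
  | nil =>
    rename_i u
    intro h1 h2; exact ⟨u, u.2, le_antisymm h1 h2⟩
  | @cons x y z h w ih =>
    intro h1 h2
    by_cases hc : f y ≤ t
    · exact ih hc h2
    · push_neg at hc
      have hadj : SierpGraph.Adj (x : ℕ × ℕ) (y : ℕ × ℕ) := h
      obtain ⟨hl, hr⟩ := abs_le.mp (hf _ _ hadj)
      exact ⟨_, x.2, by omega⟩

private lemma reachIn_ivt {s : Set (ℕ × ℕ)} (f : ℕ × ℕ → ℤ)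
    (hf : ∀ p q : ℕ × ℕ, SierpGraph.Adj p q → |f p - f q| ≤ 1) (t : ℤ) {v w : ℕ × ℕ}
    (h : SierpGraph.ReachIn s v w) (h1 : f v ≤ t) (h2 : t ≤ f w) : ∃ u ∈ s, f u = t := by
  obtain ⟨hv, hw, hr⟩ := h
  obtain ⟨p⟩ := hr
  exact walk_ivt f hf t p h1 h2

private lemma reachIn_lt_iff {s : Set (ℕ × ℕ)} (f : ℕ × ℕ → ℤ)
    (hf : ∀ p q : ℕ × ℕ, SierpGraph.Adj p q → |f p - f q| ≤ 1) (t : ℤ)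
    (hs : ∀ u ∈ s, f u ≠ t) {v w : ℕ × ℕ}
    (h : SierpGraph.ReachIn s v w) : (f v < t ↔ f w < t) := by
  constructor
  · intro hv; by_contra hw'
    push_neg at hw'
    obtain ⟨u, hu, hut⟩ := reachIn_ivt f hf t h hv.le hw'
    exact hs u hu hut
  · intro hw'; by_contra hv'
    push_neg at hv'
    obtain ⟨u, hu, hut⟩ := reachIn_ivt f hf t (reachIn_symm h) hw'.le hv'
    exact hs u hu hut

private lemma line_sum_le (G : Finset (ℕ × ℕ)) (f : ℕ × ℕ → ℤ) (g : ℕ → ℤ)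
    (hg : ∀ i j, g i = g j → i = j) (n : ℕ) :
    ∑ i ∈ Finset.range n, (G.filter (fun p => f p = g i)).card ≤ G.card := by
  classical
  rw [← Finset.card_biUnion]
  · exact Finset.card_le_card (fun p hp => by
      simp only [Finset.mem_biUnion] at hp
      obtain ⟨i, -, hp⟩ := hp
      exact Finset.mem_of_mem_filter p hp)
  · intro i _ j _ hij
    rw [Function.onFun, Finset.disjoint_left]
    intro p hp1 hp2
    rw [Finset.mem_filter] at hp1 hp2
    exact hij (hg i j (hp1.2 ▸ hp2.2))

private lemma exists_cheap_pair (G : Finset (ℕ × ℕ)) (f : ℕ × ℕ → ℤ) (k : ℕ)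
    (hn : G.card < 6 ^ (k + 1)) (base : ℤ) :
    ∃ i : ℕ, i < 3 ^ k ∧
      (G.filter (fun p => f p = base + i)).card
        + (G.filter (fun p => f p = base + i + (3 ^ k + 1))).card < 12 * 2 ^ k := by
  by_contra hcon
  push_neg at hcon
  have h1 := line_sum_le G f (fun i => base + i) (by intro i j h; simpa using h) (3 ^ k)
  have h2 := line_sum_le G f (fun i => base + i + (3 ^ k + 1))
      (by
        intro i j h
        have h' : base + (i : ℤ) + (3 ^ k + 1) = base + (j : ℤ) + (3 ^ k + 1) := h
        have : (i : ℤ) = j := by linarith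
        exact_mod_cast this) (3 ^ k)
  have hsplit : ∑ i ∈ Finset.range (3 ^ k),
      ((G.filter (fun p => f p = base + i)).card
        + (G.filter (fun p => f p = base + i + (3 ^ k + 1))).card)
      = ∑ i ∈ Finset.range (3 ^ k), (G.filter (fun p => f p = base + i)).card
        + ∑ i ∈ Finset.range (3 ^ k), (G.filter (fun p => f p = base + i + (3 ^ k + 1))).card :=
    Finset.sum_add_distrib
  have hlow : 3 ^ k * (12 * 2 ^ k) ≤ ∑ i ∈ Finset.range (3 ^ k),
      ((G.filter (fun p => f p = base + i)).card
        + (G.filter (fun p => f p = base + i + (3 ^ k + 1))).card) := by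
    have := Finset.card_nsmul_le_sum (Finset.range (3 ^ k))
      (fun i => (G.filter (fun p => f p = base + i)).card
        + (G.filter (fun p => f p = base + i + (3 ^ k + 1))).card)
      (12 * 2 ^ k) (fun i hi => hcon i (Finset.mem_range.mp hi))
    simpa [smul_eq_mul] using this
  have h6 : (6 : ℕ) ^ (k + 1) = 6 * 6 ^ k := pow_succ' 6 k
  have h36 : 3 ^ k * (12 * 2 ^ k) = 12 * 6 ^ k := by
    rw [show (6 : ℕ) = 3 * 2 from rfl, mul_pow]; ring
  omega



private lemma median_lines (G : Finset (ℕ × ℕ)) (hGne : G.Nonempty) (k : ℕ)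
    (hn : G.card < 6 ^ (k + 1)) (f : ℕ × ℕ → ℕ) :
    ∃ t1 t2 : ℤ, t2 = t1 + 3 ^ k + 1 ∧
      (G.filter (fun p => (f p : ℤ) = t1)).card
        + (G.filter (fun p => (f p : ℤ) = t2)).card < 12 * 2 ^ k ∧
      2 * (G.filter (fun p => (f p : ℤ) < t1)).card ≤ G.card ∧
      2 * (G.filter (fun p => t2 < (f p : ℤ))).card ≤ G.card := by
  classical
  have hex : ∃ m : ℕ, G.card < 2 * (G.filter (fun p => f p ≤ m)).card := by
    refine ⟨G.sup f, ?_⟩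
    rw [Finset.filter_true_of_mem (fun p hp => Finset.le_sup hp)]
    have := Finset.card_pos.mpr hGne
    omega
  set m := Nat.find hex with hmdef
  have hm : G.card < 2 * (G.filter (fun p => f p ≤ m)).card := Nat.find_spec hex
  have hmin : ∀ j, j < m → 2 * (G.filter (fun p => f p ≤ j)).card ≤ G.card := by
    intro j hj
    have := Nat.find_min hex hj
    omega
  have hleftm : 2 * (G.filter (fun p => (f p : ℤ) < (m : ℤ))).card ≤ G.card := by
    rcases Nat.eq_zero_or_pos m with hm0 | hm0
    · have hemp : G.filter (fun p => (f p : ℤ) < (m : ℤ)) = ∅ := by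
        apply Finset.filter_false_of_mem
        intro p _
        rw [hm0]
        simp
      rw [hemp]
      simp
    · have hcong : G.filter (fun p => (f p : ℤ) < (m : ℤ))
          = G.filter (fun p => f p ≤ m - 1) := by
        apply Finset.filter_congr
        intro p _
        have hc : (f p : ℤ) < (m : ℤ) ↔ f p < m := by exact_mod_cast Iff.rfl
        rw [hc]
        constructor <;> (intro h; omega)
      rw [hcong]
      exact hmin (m - 1) (by omega)
  have hrightm : 2 * (G.filter (fun p => (m : ℤ) < (f p : ℤ))).card ≤ G.card := by
    have hcong : G.filter (fun p => (m : ℤ) < (f p : ℤ))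
        = G.filter (fun p => ¬ (f p ≤ m)) := by
      apply Finset.filter_congr
      intro p _
      have hc : (m : ℤ) < (f p : ℤ) ↔ m < f p := by exact_mod_cast Iff.rfl
      rw [hc]
      constructor <;> (intro h; omega)
    have hadd := Finset.card_filter_add_card_filter_not (s := G)
      (p := fun p => f p ≤ m)
    rw [hcong]
    omega
  obtain ⟨i, hi, hcost⟩ := exists_cheap_pair G (fun p => (f p : ℤ)) k hn ((m : ℤ) - 3 ^ k + 1)
  have hiz : (i : ℤ) < 3 ^ k := by exact_mod_cast hi
  have hi0 : (0 : ℤ) ≤ i := Int.natCast_nonneg i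
  refine ⟨(m : ℤ) - 3 ^ k + 1 + i, (m : ℤ) - 3 ^ k + 1 + i + (3 ^ k + 1), by ring, hcost, ?_, ?_⟩
  · have hsub : G.filter (fun p => (f p : ℤ) < (m : ℤ) - 3 ^ k + 1 + i)
        ⊆ G.filter (fun p => (f p : ℤ) < (m : ℤ)) := by
      intro p hp
      rw [Finset.mem_filter] at hp ⊢
      exact ⟨hp.1, by linarith [hp.2]⟩
    have := Finset.card_le_card hsub
    omega
  · have hsub : G.filter (fun p => (m : ℤ) - 3 ^ k + 1 + i + (3 ^ k + 1) < (f p : ℤ))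
        ⊆ G.filter (fun p => (m : ℤ) < (f p : ℤ)) := by
      intro p hp
      rw [Finset.mem_filter] at hp ⊢
      exact ⟨hp.1, by linarith [hp.2]⟩
    have := Finset.card_le_card hsub
    omega



private lemma compIn_subset (s : Set (ℕ × ℕ)) (v : ℕ × ℕ) :
    SierpGraph.compIn s v ⊆ s := by
  intro w hw
  obtain ⟨-, hw2, -⟩ := hw
  exact hw2

private lemma ncard_le_of_subset_finset {s : Set (ℕ × ℕ)} {F : Finset (ℕ × ℕ)}
    (h : s ⊆ ↑F) : s.ncard ≤ F.card := by
  have := Set.ncard_le_ncard h F.finite_toSet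
  simpa [Set.ncard_coe_finset] using this


/-- Any finite subgraph `G` of the infinite Sierpinski graph on `q·6^k + r` vertices
(`0 ≤ q < 6`, `0 ≤ r < 6^k`) admits a vertex set `T` with `|T| ≤ 24·2^k` such that `G − T`
has at most one connected component with more than `|G|/2` vertices, and any such component
is contained in a square of side length `3^k`. -/
theorem pre_square_cut (k q r : ℕ) (hq : q < 6) (hr : r < 6 ^ k)
    (G : Finset (ℕ × ℕ)) (hmem : ∀ p ∈ G, SierpMem p)
    (hcard : G.card = q * 6 ^ k + r) :
    ∃ T : Finset (ℕ × ℕ), T ⊆ G ∧ T.card ≤ 24 * 2 ^ k ∧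
      (∀ v w : ℕ × ℕ,
          G.card < 2 * (SierpGraph.compIn (↑(G \ T)) v).ncard →
          G.card < 2 * (SierpGraph.compIn (↑(G \ T)) w).ncard →
          SierpGraph.compIn (↑(G \ T)) v = SierpGraph.compIn (↑(G \ T)) w) ∧
      ∃ a c : ℤ, ∀ v : ℕ × ℕ,
        G.card < 2 * (SierpGraph.compIn (↑(G \ T)) v).ncard →
        ∀ p ∈ SierpGraph.compIn (↑(G \ T)) v,
          a ≤ (p.1 : ℤ) ∧ (p.1 : ℤ) ≤ a + 3 ^ k ∧ c ≤ (p.2 : ℤ) ∧ (p.2 : ℤ) ≤ c + 3 ^ k := by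
  classical
  have hn : G.card < 6 ^ (k + 1) := by
    have h1 : q * 6 ^ k ≤ 5 * 6 ^ k := Nat.mul_le_mul_right _ (by omega)
    have h2 : (6 : ℕ) ^ (k + 1) = 6 * 6 ^ k := by ring
    omega
  by_cases hG0 : G = ∅
  · subst hG0
    refine ⟨∅, Finset.Subset.refl _, by simp, ?_, 0, 0, ?_⟩
    · intro v w hv _
      exfalso
      have h1 : (SierpGraph.compIn (↑((∅ : Finset (ℕ × ℕ)) \ ∅)) v).ncard
          ≤ ((∅ : Finset (ℕ × ℕ)) \ ∅).card :=
        ncard_le_of_subset_finset (compIn_subset _ _)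
      simp at h1 hv
      omega
    · intro v hv
      exfalso
      have h1 : (SierpGraph.compIn (↑((∅ : Finset (ℕ × ℕ)) \ ∅)) v).ncard
          ≤ ((∅ : Finset (ℕ × ℕ)) \ ∅).card :=
        ncard_le_of_subset_finset (compIn_subset _ _)
      simp at h1 hv
      omega
  · have hGne : G.Nonempty := Finset.nonempty_iff_ne_empty.mpr hG0
    obtain ⟨t1, t2, ht2, hcostx, hleftx, hrightx⟩ := median_lines G hGne k hn Prod.fst
    obtain ⟨s1, s2, hs2, hcosty, hlefty, hrighty⟩ := median_lines G hGne k hn Prod.snd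
    set T := G.filter
      (fun p => (p.1 : ℤ) = t1 ∨ (p.1 : ℤ) = t2 ∨ (p.2 : ℤ) = s1 ∨ (p.2 : ℤ) = s2)
      with hTdef
    have hTsub : T ⊆ G := Finset.filter_subset _ _
    have hTcard : T.card ≤ 24 * 2 ^ k := by
      have hsub4 : T ⊆ ((G.filter fun p => (p.1 : ℤ) = t1) ∪ (G.filter fun p => (p.1 : ℤ) = t2))
          ∪ ((G.filter fun p => (p.2 : ℤ) = s1) ∪ (G.filter fun p => (p.2 : ℤ) = s2)) := by
        intro p hp
        rw [hTdef, Finset.mem_filter] at hp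
        simp only [Finset.mem_union, Finset.mem_filter]
        tauto
      have hc := Finset.card_le_card hsub4
      have h1 := Finset.card_union_le
        ((G.filter fun p => (p.1 : ℤ) = t1) ∪ (G.filter fun p => (p.1 : ℤ) = t2))
        ((G.filter fun p => (p.2 : ℤ) = s1) ∪ (G.filter fun p => (p.2 : ℤ) = s2))
      have h2 := Finset.card_union_le (G.filter fun p => (p.1 : ℤ) = t1)
        (G.filter fun p => (p.1 : ℤ) = t2)
      have h3 := Finset.card_union_le (G.filter fun p => (p.2 : ℤ) = s1)
        (G.filter fun p => (p.2 : ℤ) = s2)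
      have e2 : (2 : ℕ) ^ k = 2 ^ k := rfl
      omega
    have hline : ∀ u : ℕ × ℕ, u ∈ (↑(G \ T) : Set (ℕ × ℕ)) →
        (u.1 : ℤ) ≠ t1 ∧ (u.1 : ℤ) ≠ t2 ∧ (u.2 : ℤ) ≠ s1 ∧ (u.2 : ℤ) ≠ s2 := by
      intro u hu
      rw [Finset.mem_coe, Finset.mem_sdiff] at hu
      obtain ⟨huG, huT⟩ := hu
      refine ⟨?_, ?_, ?_, ?_⟩ <;>
        (intro h; exact huT (Finset.mem_filter.mpr ⟨huG, by tauto⟩))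
    have hGmem : ∀ p ∈ (↑(G \ T) : Set (ℕ × ℕ)), p ∈ G := by
      intro p hp
      rw [Finset.mem_coe, Finset.mem_sdiff] at hp
      exact hp.1
    have hfx : ∀ p' q' : ℕ × ℕ, SierpGraph.Adj p' q' → |(p'.1 : ℤ) - (q'.1 : ℤ)| ≤ 1 :=
      fun p' q' h => (adj_abs h).1
    have hfy : ∀ p' q' : ℕ × ℕ, SierpGraph.Adj p' q' → |(p'.2 : ℤ) - (q'.2 : ℤ)| ≤ 1 :=
      fun p' q' h => (adj_abs h).2
    have key : ∀ v : ℕ × ℕ, G.card < 2 * (SierpGraph.compIn (↑(G \ T)) v).ncard →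
        ∀ p ∈ SierpGraph.compIn (↑(G \ T)) v,
          t1 < (p.1 : ℤ) ∧ (p.1 : ℤ) < t2 ∧ s1 < (p.2 : ℤ) ∧ (p.2 : ℤ) < s2 := by
      intro v hbig
      have hvs : v ∈ (↑(G \ T) : Set (ℕ × ℕ)) := by
        by_contra hv
        have hemp : SierpGraph.compIn (↑(G \ T)) v = ∅ := by
          ext w
          simp only [SimpleGraph.compIn, SimpleGraph.ReachIn, Set.mem_setOf_eq,
            Set.mem_empty_iff_false, iff_false]
          rintro ⟨hv', -, -⟩
          exact hv hv'
        rw [hemp, Set.ncard_empty] at hbig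
        omega
      have hnotlt : ∀ f : ℕ × ℕ → ℤ, (∀ p' q', SierpGraph.Adj p' q' → |f p' - f q'| ≤ 1) →
          ∀ t : ℤ, (∀ u ∈ (↑(G \ T) : Set (ℕ × ℕ)), f u ≠ t) →
          2 * (G.filter (fun p => f p < t)).card ≤ G.card → ¬ (f v < t) := by
        intro f hf t hne hhalf hvlt
        have hCsub : SierpGraph.compIn (↑(G \ T)) v ⊆ ↑(G.filter (fun p => f p < t)) := by
          intro p hp
          have hps := compIn_subset _ _ hp
          have hr : SierpGraph.ReachIn (↑(G \ T)) v p := hp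
          have hlt : f p < t := (reachIn_lt_iff f hf t hne hr).mp hvlt
          rw [Finset.mem_coe, Finset.mem_filter]
          exact ⟨hGmem p hps, hlt⟩
        have := ncard_le_of_subset_finset hCsub
        omega
      have hnotgt : ∀ f : ℕ × ℕ → ℤ, (∀ p' q', SierpGraph.Adj p' q' → |f p' - f q'| ≤ 1) →
          ∀ t : ℤ, (∀ u ∈ (↑(G \ T) : Set (ℕ × ℕ)), f u ≠ t) →
          2 * (G.filter (fun p => t < f p)).card ≤ G.card → ¬ (t < f v) := by
        intro f hf t hne hhalf hvgt
        have hCsub : SierpGraph.compIn (↑(G \ T)) v ⊆ ↑(G.filter (fun p => t < f p)) := by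
          intro p hp
          have hps := compIn_subset _ _ hp
          have hr : SierpGraph.ReachIn (↑(G \ T)) v p := hp
          have h1 : ¬ (f p < t) := by
            intro h
            have := (reachIn_lt_iff f hf t hne hr).mpr h
            omega
          have h2 : f p ≠ t := hne p hps
          rw [Finset.mem_coe, Finset.mem_filter]
          exact ⟨hGmem p hps, by omega⟩
        have := ncard_le_of_subset_finset hCsub
        omega
      have hx1 : ¬ ((v.1 : ℤ) < t1) :=
        hnotlt (fun p => (p.1 : ℤ)) hfx t1 (fun u hu => (hline u hu).1) hleftx
      have hx2 : ¬ (t2 < (v.1 : ℤ)) :=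
        hnotgt (fun p => (p.1 : ℤ)) hfx t2 (fun u hu => (hline u hu).2.1) hrightx
      have hy1 : ¬ ((v.2 : ℤ) < s1) :=
        hnotlt (fun p => (p.2 : ℤ)) hfy s1 (fun u hu => (hline u hu).2.2.1) hlefty
      have hy2 : ¬ (s2 < (v.2 : ℤ)) :=
        hnotgt (fun p => (p.2 : ℤ)) hfy s2 (fun u hu => (hline u hu).2.2.2) hrighty
      obtain ⟨hv1, hv2, hv3, hv4⟩ := hline v hvs
      intro p hp
      have hr : SierpGraph.ReachIn (↑(G \ T)) v p := hp
      obtain ⟨hp1, hp2, hp3, hp4⟩ := hline p (compIn_subset _ _ hp)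
      have e1 : ((v.1 : ℤ) < t1 ↔ (p.1 : ℤ) < t1) :=
        reachIn_lt_iff _ hfx t1 (fun u hu => (hline u hu).1) hr
      have e2 : ((v.1 : ℤ) < t2 ↔ (p.1 : ℤ) < t2) :=
        reachIn_lt_iff _ hfx t2 (fun u hu => (hline u hu).2.1) hr
      have e3 : ((v.2 : ℤ) < s1 ↔ (p.2 : ℤ) < s1) :=
        reachIn_lt_iff _ hfy s1 (fun u hu => (hline u hu).2.2.1) hr
      have e4 : ((v.2 : ℤ) < s2 ↔ (p.2 : ℤ) < s2) :=
        reachIn_lt_iff _ hfy s2 (fun u hu => (hline u hu).2.2.2) hr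
      refine ⟨?_, ?_, ?_, ?_⟩
      · have : ¬ ((p.1 : ℤ) < t1) := fun h => hx1 (e1.mpr h)
        omega
      · have hvlt : (v.1 : ℤ) < t2 := by omega
        exact e2.mp hvlt
      · have : ¬ ((p.2 : ℤ) < s1) := fun h => hy1 (e3.mpr h)
        omega
      · have hvlt : (v.2 : ℤ) < s2 := by omega
        exact e4.mp hvlt
    refine ⟨T, hTsub, hTcard, ?_, t1 + 1, s1 + 1, ?_⟩
    · intro v w hv hw
      have hfinv : (SierpGraph.compIn (↑(G \ T)) v).Finite :=
        Set.Finite.subset (G \ T).finite_toSet (compIn_subset _ _)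
      have hfinw : (SierpGraph.compIn (↑(G \ T)) w).Finite :=
        Set.Finite.subset (G \ T).finite_toSet (compIn_subset _ _)
      have hnd : ¬ Disjoint (SierpGraph.compIn (↑(G \ T)) v)
          (SierpGraph.compIn (↑(G \ T)) w) := by
        intro hd
        have hu := Set.ncard_union_eq hd hfinv hfinw
        have hsubU : SierpGraph.compIn (↑(G \ T)) v ∪ SierpGraph.compIn (↑(G \ T)) w
            ⊆ ↑(G \ T) := Set.union_subset (compIn_subset _ _) (compIn_subset _ _)
        have h1 := ncard_le_of_subset_finset hsubU
        have h2 : (G \ T).card ≤ G.card := Finset.card_le_card (Finset.sdiff_subset)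
        omega
      obtain ⟨x, hxv, hxw⟩ := Set.not_disjoint_iff.mp hnd
      have hxv' : SierpGraph.ReachIn (↑(G \ T)) v x := hxv
      have hxw' : SierpGraph.ReachIn (↑(G \ T)) w x := hxw
      ext y
      simp only [SimpleGraph.compIn, Set.mem_setOf_eq]
      constructor
      · intro hy
        exact reachIn_trans hxw' (reachIn_trans (reachIn_symm hxv') hy)
      · intro hy
        exact reachIn_trans hxv' (reachIn_trans (reachIn_symm hxw') hy)
    · intro v hbig p hp
      obtain ⟨h1, h2, h3, h4⟩ := key v hbig p hp
      rw [ht2] at h2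
      rw [hs2] at h4
      refine ⟨by omega, by omega, by omega, by omega⟩
end

section
/- The separation profile of the infinite Sierpiński graph S satisfies sep^{1/2}_S(n) ≼ n^{log 2 / log 6}: there exists a constant C > 0 such that for all n ≥ 1, sep^{1/2}_S(n) ≤ C·n^{log 2 / log 6}. -/
open scoped Classical

/-- all-ones base-3 number with i digits -/
def allOnes : ℕ → ℕ
  | 0 => 0
  | (i+1) => 3 * allOnes i + 1

lemma allOnes_lt (i : ℕ) : allOnes i < 3 ^ i := by
  induction i with
  | zero => simp [allOnes]
  | succ i ih => rw [pow_succ]; simp only [allOnes]; omega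

lemma digit_mod {t k : ℕ} (x : ℕ) (h : t < k) : digit 3 t (x % 3 ^ k) = digit 3 t x := by
  unfold digit
  have h3 : (3:ℕ) ^ k = 3 ^ t * 3 ^ (k - t) := by rw [← pow_add]; congr 1; omega
  rw [h3, Nat.mod_mul_right_div_self]
  exact Nat.mod_mod_of_dvd _ (dvd_pow_self 3 (by omega : k - t ≠ 0))

lemma allOnes_digit {t i : ℕ} (h : t < i) : digit 3 t (allOnes i) = 1 := by
  induction i generalizing t with
  | zero => omega
  | succ i ih =>
    cases t with
    | zero =>
      show (3 * allOnes i + 1) / 3 ^ 0 % 3 = 1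
      simp [Nat.mul_add_mod]
    | succ t =>
      show (3 * allOnes i + 1) / 3 ^ (t+1) % 3 = 1
      have e : (3 * allOnes i + 1) / 3 ^ (t+1) = allOnes i / 3 ^ t := by
        rw [pow_succ']
        rw [← Nat.div_div_eq_div_mul]
        congr 1
        omega
      rw [e]
      exact ih (by omega)

/-- base-3 strings of length i avoiding the digit 1 -/
noncomputable def Dset (i : ℕ) : Finset ℕ :=
  (Finset.range (3 ^ i)).filter (fun d => ∀ t < i, digit 3 t d ≠ 1)

lemma Dset_card (i : ℕ) : (Dset i).card ≤ 2 ^ i := by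
  induction i with
  | zero =>
    have : Dset 0 ⊆ Finset.range 1 := Finset.filter_subset _ _
    simpa using Finset.card_le_card this
  | succ i ih =>
    have hsub : ∀ d ∈ Dset (i+1),
        (d / 3 ^ i, d % 3 ^ i) ∈ (({0, 2} : Finset ℕ) ×ˢ Dset i) := by
      intro d hd
      simp only [Dset, Finset.mem_filter, Finset.mem_range] at hd
      obtain ⟨hlt, hdig⟩ := hd
      have hdivlt : d / 3 ^ i < 3 := by
        rw [Nat.div_lt_iff_lt_mul (by positivity)]
        rw [pow_succ] at hlt; omega
      have hne : d / 3 ^ i ≠ 1 := by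
        have := hdig i (by omega)
        unfold digit at this
        rwa [Nat.mod_eq_of_lt hdivlt] at this
      simp only [Finset.mem_product, Finset.mem_insert, Finset.mem_singleton]
      generalize hq : d / 3 ^ i = q at hdivlt hne ⊢
      constructor
      · omega
      · simp only [Dset, Finset.mem_filter, Finset.mem_range]
        refine ⟨Nat.mod_lt _ (by positivity), ?_⟩
        intro t ht
        rw [digit_mod d ht]
        exact hdig t (by omega)
    have hinj : Set.InjOn (fun d => (d / 3 ^ i, d % 3 ^ i)) ↑(Dset (i+1)) := by
      intro x hx y hy hxy
      simp only [Prod.mk.injEq] at hxy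
      have hx' := Nat.div_add_mod x (3 ^ i)
      have hy' := Nat.div_add_mod y (3 ^ i)
      rw [← hxy.1, ← hxy.2] at hy'
      omega
    have := Finset.card_le_card_of_injOn _ hsub hinj
    calc (Dset (i+1)).card ≤ (({0, 2} : Finset ℕ) ×ˢ Dset i).card := this
      _ = 2 * (Dset i).card := by rw [Finset.card_product]; norm_num
      _ ≤ 2 * 2 ^ i := by omega
      _ = 2 ^ (i+1) := by ring

lemma geo_sum : ∀ (k u : ℕ), (∑ s ∈ Finset.range k, u / 3 ^ s) ≤ 2 * u := by
  intro k
  induction k with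
  | zero => intro u; simp
  | succ k ih =>
    intro u
    rw [Finset.sum_range_succ']
    have e : ∀ s, u / 3 ^ (s+1) = (u / 3) / 3 ^ s := by
      intro s; rw [pow_succ', Nat.div_div_eq_div_mul]
    simp only [e, pow_zero, Nat.div_one]
    have h1 := ih (u / 3)
    have h2 : u / 3 * 3 ≤ u := Nat.div_mul_le_self u 3
    omega

/-- cost function of the recursion -/
def Fcost (m : ℕ) (i : ℕ) : ℕ := ∑ t ∈ Finset.range i, 2 * min (32 * 2 ^ t) (m / 3 ^ t)

lemma sum_two_pow (k : ℕ) : (∑ t ∈ Finset.range k, 2 ^ t) < 2 ^ k := by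
  induction k with
  | zero => simp
  | succ k ih => rw [Finset.sum_range_succ, pow_succ]; omega

lemma Fcost_le (m i J : ℕ) (hJ : m < 6 ^ J) : Fcost m i ≤ 68 * 2 ^ J := by
  classical
  have hsplit := Finset.sum_filter_add_sum_filter_not (Finset.range i) (fun t => t < J)
    (fun t => 2 * min (32 * 2 ^ t) (m / 3 ^ t))
  have h1 : (∑ t ∈ (Finset.range i).filter (fun t => t < J), 2 * min (32 * 2 ^ t) (m / 3 ^ t))
      ≤ 64 * 2 ^ J := by
    calc _ ≤ ∑ t ∈ (Finset.range i).filter (fun t => t < J), 64 * 2 ^ t := by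
            apply Finset.sum_le_sum
            intro t _
            have : min (32 * 2 ^ t) (m / 3 ^ t) ≤ 32 * 2 ^ t := min_le_left _ _
            omega
      _ ≤ ∑ t ∈ Finset.range J, 64 * 2 ^ t := by
            apply Finset.sum_le_sum_of_subset
            intro t ht
            simp only [Finset.mem_filter, Finset.mem_range] at ht ⊢
            omega
      _ = 64 * ∑ t ∈ Finset.range J, 2 ^ t := by rw [Finset.mul_sum]
      _ ≤ 64 * 2 ^ J := by have := sum_two_pow J; omega
  have h2 : (∑ t ∈ (Finset.range i).filter (fun t => ¬ t < J), 2 * min (32 * 2 ^ t) (m / 3 ^ t))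
      ≤ 4 * 2 ^ J := by
    have hu : m / 3 ^ J ≤ 2 ^ J := by
      have h6 : (6:ℕ) ^ J = 2 ^ J * 3 ^ J := by rw [← mul_pow]; norm_num
      have := (Nat.div_lt_iff_lt_mul (show 0 < 3 ^ J by positivity)).mpr (by omega : m < 2 ^ J * 3 ^ J)
      omega
    calc _ ≤ ∑ t ∈ (Finset.range i).filter (fun t => ¬ t < J), 2 * (m / 3 ^ t) := by
            apply Finset.sum_le_sum
            intro t _
            have : min (32 * 2 ^ t) (m / 3 ^ t) ≤ m / 3 ^ t := min_le_right _ _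
            omega
      _ ≤ ∑ t ∈ (Finset.range i).image (fun s => J + s), 2 * (m / 3 ^ t) := by
            apply Finset.sum_le_sum_of_subset
            intro t ht
            simp only [Finset.mem_filter, Finset.mem_range, Finset.mem_image] at ht ⊢
            exact ⟨t - J, by omega, by omega⟩
      _ = ∑ s ∈ Finset.range i, 2 * (m / 3 ^ (J + s)) := by
            rw [Finset.sum_image]
            intro a _ b _ h
            have h' : J + a = J + b := h
            omega
      _ = 2 * ∑ s ∈ Finset.range i, (m / 3 ^ J) / 3 ^ s := by
            rw [Finset.mul_sum]
            apply Finset.sum_congr rfl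
            intro s _
            rw [pow_add, Nat.div_div_eq_div_mul]
      _ ≤ 2 * (2 * (m / 3 ^ J)) := by have := geo_sum i (m / 3 ^ J); omega
      _ ≤ 4 * 2 ^ J := by omega
  calc Fcost m i = _ + _ := hsplit.symm
    _ ≤ 64 * 2 ^ J + 4 * 2 ^ J := by omega
    _ = 68 * 2 ^ J := by ring

section GraphLemmas

variable {V : Type*} {X : SimpleGraph V}

lemma SimpleGraph.compIn_subset (X : SimpleGraph V) (s : Set V) (v : V) :
    X.compIn s v ⊆ s := by
  rintro w ⟨hv, hw, -⟩
  exact hw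

lemma walk_transfer {s t : Set V} :
    ∀ {u v : s} (w : (X.induce s).Walk u v), (∀ z ∈ w.support, (z : V) ∈ t) →
      ∀ (hu : (u : V) ∈ t) (hv : (v : V) ∈ t),
      (X.induce t).Reachable ⟨u, hu⟩ ⟨v, hv⟩ := by
  intro u v w
  induction w with
  | nil => intro _ hu hv; exact SimpleGraph.Reachable.refl _
  | @cons a b c hadj w ih =>
    intro ht hu hv
    have hb : (b : V) ∈ t := ht b (by simp)
    have hXab : X.Adj a b := hadj
    have hadj' : (X.induce t).Adj ⟨a, hu⟩ ⟨b, hb⟩ := hXab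
    exact hadj'.reachable.trans (ih (fun z hz => ht z (by simp [hz])) hb hv)

lemma SimpleGraph.reachIn_mono {s s' : Set V} (hss : s ⊆ s') {v w : V}
    (h : X.ReachIn s v w) : X.ReachIn s' v w := by
  obtain ⟨hv, hw, hr⟩ := h
  obtain ⟨w'⟩ := hr
  exact ⟨hss hv, hss hw, walk_transfer w' (fun z _ => hss z.2) (hss hv) (hss hw)⟩

lemma SimpleGraph.compIn_mono {s s' : Set V} (hss : s ⊆ s') (v : V) :
    X.compIn s v ⊆ X.compIn s' v := fun _ h => SimpleGraph.reachIn_mono hss h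

lemma SimpleGraph.compIn_eq_of_mem {s : Set V} {v z : V} (hz : z ∈ X.compIn s v) :
    X.compIn s v = X.compIn s z := by
  obtain ⟨hv, hzs, hvz⟩ := hz
  ext w
  constructor
  · rintro ⟨hv', hw, hvw⟩
    exact ⟨hzs, hw, hvz.symm.trans hvw⟩
  · rintro ⟨hz', hw, hzw⟩
    exact ⟨hv, hw, hvz.trans hzw⟩

lemma SimpleGraph.compIn_reachIn {s : Set V} {v p q : V}
    (hp : p ∈ X.compIn s v) (hq : q ∈ X.compIn s v) :
    X.ReachIn (X.compIn s v) p q := by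
  obtain ⟨hv, hps, rp⟩ := hp
  obtain ⟨hv', hqs, rq⟩ := hq
  obtain ⟨w⟩ := rp.symm.trans rq
  have hsup : ∀ z ∈ w.support, (z : V) ∈ X.compIn s v := by
    intro z hz
    refine ⟨hv, z.2, ?_⟩
    have : (X.induce s).Reachable ⟨p, hps⟩ z := ⟨w.takeUntil z hz⟩
    exact (rp.trans this : (X.induce s).Reachable ⟨v, hv⟩ z)
  have hpmem : p ∈ X.compIn s v := ⟨hv, hps, rp⟩
  have hqmem : q ∈ X.compIn s v := ⟨hv', hqs, rq⟩
  exact ⟨hpmem, hqmem, walk_transfer w hsup hpmem hqmem⟩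

end GraphLemmas

lemma sierp_adj_close {p q : ℕ × ℕ} (h : SierpGraph.Adj p q) :
    (q.1 ≤ p.1 + 1 ∧ p.1 ≤ q.1 + 1) ∧ (q.2 ≤ p.2 + 1 ∧ p.2 ≤ q.2 + 1) := by
  obtain ⟨-, -, habs⟩ := h
  have h1 : |(p.1 : ℤ) - q.1| ≤ 1 := by
    have := abs_nonneg ((p.2 : ℤ) - q.2); linarith
  have h2 : |(p.2 : ℤ) - q.2| ≤ 1 := by
    have := abs_nonneg ((p.1 : ℤ) - q.1); linarith
  rw [abs_le] at h1 h2
  omega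

lemma cross_aux (proj : ℕ × ℕ → ℕ)
    (hstep : ∀ a b : ℕ × ℕ, SierpGraph.Adj a b → proj b ≤ proj a + 1)
    {s : Set (ℕ × ℕ)} {c : ℕ} :
    ∀ {u v : s} (w : (SierpGraph.induce s).Walk u v),
      proj u ≤ c → c ≤ proj v → ∃ z ∈ s, proj z = c := by
  intro u v w
  induction w with
  | nil =>
    intro h1 h2
    refine ⟨_, Subtype.coe_prop _, le_antisymm h1 h2⟩
  | @cons a b d hadj w ih =>
    intro h1 h2
    by_cases hb : proj b ≤ c
    · exact ih hb h2
    · have hXab : SierpGraph.Adj a b := hadj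
      have := hstep a b hXab
      exact ⟨a, a.2, by omega⟩

lemma reachIn_cross_fst {s : Set (ℕ × ℕ)} {p q : ℕ × ℕ}
    (h : SierpGraph.ReachIn s p q) {c : ℕ} (h1 : p.1 ≤ c) (h2 : c ≤ q.1) :
    ∃ z ∈ s, z.1 = c := by
  obtain ⟨hp, hq, ⟨w⟩⟩ := h
  exact cross_aux Prod.fst (fun a b hab => ((sierp_adj_close hab).1).1) w h1 h2

lemma reachIn_cross_snd {s : Set (ℕ × ℕ)} {p q : ℕ × ℕ}
    (h : SierpGraph.ReachIn s p q) {c : ℕ} (h1 : p.2 ≤ c) (h2 : c ≤ q.2) :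
    ∃ z ∈ s, z.2 = c := by
  obtain ⟨hp, hq, ⟨w⟩⟩ := h
  exact cross_aux Prod.snd (fun a b hab => ((sierp_adj_close hab).2).1) w h1 h2

def pieceIdx (q3 r x : ℕ) : ℕ := (x + (q3 - r)) / q3

lemma piece_mem {q3 r x w : ℕ} (hq3 : 0 < q3) (hr : r < q3)
    (hw : pieceIdx q3 r x = w) : w * q3 + r - q3 ≤ x ∧ x < w * q3 + r := by
  unfold pieceIdx at hw
  have e1 : w * q3 ≤ x + (q3 - r) := by
    rw [← hw]; exact Nat.div_mul_le_self _ _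
  have e2 : x + (q3 - r) < w * q3 + q3 := by
    have h := (Nat.div_lt_iff_lt_mul hq3).mp (by omega : (x + (q3 - r)) / q3 < w + 1)
    calc x + (q3 - r) < (w + 1) * q3 := h
      _ = w * q3 + q3 := by ring
  generalize w * q3 = W at e1 e2 ⊢
  omega

lemma piece_disjoint {q3 r w1 w2 x : ℕ} (hr : r < q3) (hw : w1 < w2)
    (h1 : x < w1 * q3 + r) (h2 : w2 * q3 + r - q3 ≤ x) : False := by
  have e : (w1 + 1) * q3 ≤ w2 * q3 := Nat.mul_le_mul_right _ (by omega)
  rw [add_mul, one_mul] at e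
  generalize w1 * q3 = W1 at e h1
  generalize w2 * q3 = W2 at e h2
  omega

/-- if two points are in different pieces, some point between them sits on a cutting line -/
lemma piece_between {q3 r x y : ℕ} (hq3 : 0 < q3) (hr : r < q3) (hxy : x ≤ y)
    (hne : pieceIdx q3 r x ≠ pieceIdx q3 r y) :
    ∃ c, x < c ∧ c ≤ y ∧ c % q3 = r := by
  have hmono : pieceIdx q3 r x ≤ pieceIdx q3 r y :=
    Nat.div_le_div_right (by omega)
  have hlt : pieceIdx q3 r x < pieceIdx q3 r y := by omega
  set dx := pieceIdx q3 r x with hdx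
  refine ⟨dx * q3 + r, ?_, ?_, ?_⟩
  · exact (piece_mem hq3 hr hdx.symm).2
  · have h1 := (piece_mem hq3 hr (rfl : pieceIdx q3 r y = pieceIdx q3 r y)).1
    have e : (dx + 1) * q3 ≤ pieceIdx q3 r y * q3 := Nat.mul_le_mul_right _ (by omega)
    rw [add_mul, one_mul] at e
    generalize hW : pieceIdx q3 r y * q3 = W at e h1
    generalize dx * q3 = W1 at e h1 ⊢
    omega
  · rw [mul_comm, Nat.mul_add_mod]
    exact Nat.mod_eq_of_lt hr

lemma exists_min_residue (q3 m : ℕ) (hq3 : 0 < q3) (G' : Finset (ℕ × ℕ))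
    (hm : G'.card ≤ m) (proj : ℕ × ℕ → ℕ) :
    ∃ r < q3, (G'.filter (fun p => proj p % q3 = r)).card ≤ m / q3 ∧
      ∀ r' < q3, (G'.filter (fun p => proj p % q3 = r)).card
        ≤ (G'.filter (fun p => proj p % q3 = r')).card := by
  obtain ⟨r, hrmem, hrmin⟩ := Finset.exists_min_image (Finset.range q3)
    (fun r => (G'.filter (fun p => proj p % q3 = r)).card) ⟨0, Finset.mem_range.mpr hq3⟩
  rw [Finset.mem_range] at hrmem
  refine ⟨r, hrmem, ?_, fun r' hr' => hrmin r' (Finset.mem_range.mpr hr')⟩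
  have hfib : G'.card = ∑ r' ∈ Finset.range q3,
      (G'.filter (fun p => proj p % q3 = r')).card :=
    Finset.card_eq_sum_card_fiberwise (fun p _ => Finset.mem_range.mpr (Nat.mod_lt _ hq3))
  have hle : q3 * (G'.filter (fun p => proj p % q3 = r)).card ≤ G'.card := by
    rw [hfib]
    calc q3 * (G'.filter (fun p => proj p % q3 = r)).card
        = ∑ _r' ∈ Finset.range q3, (G'.filter (fun p => proj p % q3 = r)).card := by
          rw [Finset.sum_const, Finset.card_range, smul_eq_mul]
      _ ≤ _ := Finset.sum_le_sum (fun r' hr' => hrmin r' hr')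
  rw [Nat.le_div_iff_mul_le hq3, mul_comm]
  omega

lemma col_count_fst (i a b : ℕ) (G' : Finset (ℕ × ℕ))
    (hS : ∀ p ∈ G', SierpMem p)
    (hbox : ∀ p ∈ G', a ≤ p.1 ∧ p.1 < a + 3 ^ (i+1) ∧ b ≤ p.2 ∧ p.2 < b + 3 ^ (i+1)) :
    (G'.filter (fun p => p.1 % 3 ^ i = allOnes i)).card ≤ 32 * 2 ^ i := by
  have hq3 : (0:ℕ) < 3 ^ i := by positivity
  set F := G'.filter (fun p => p.1 % 3 ^ i = allOnes i) with hF
  have hmem : ∀ p ∈ F, (p.1 / 3 ^ i, (p.2 / 3 ^ i, p.2 % 3 ^ i)) ∈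
      (Finset.Icc (a / 3 ^ i) (a / 3 ^ i + 3)) ×ˢ
        ((Finset.Icc (b / 3 ^ i) (b / 3 ^ i + 3)) ×ˢ Dset i) := by
    intro p hp
    rw [hF, Finset.mem_filter] at hp
    obtain ⟨hpG, hprs⟩ := hp
    obtain ⟨hax, hxa, hby, hyb⟩ := hbox p hpG
    have hdiv : ∀ u c : ℕ, c ≤ u → u < c + 3 ^ (i+1) →
        c / 3 ^ i ≤ u / 3 ^ i ∧ u / 3 ^ i ≤ c / 3 ^ i + 3 := by
      intro u c hcu huc
      constructor
      · exact Nat.div_le_div_right hcu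
      · calc u / 3 ^ i ≤ (c + 3 * 3 ^ i) / 3 ^ i := by
              apply Nat.div_le_div_right
              rw [pow_succ] at huc; omega
          _ = c / 3 ^ i + 3 := Nat.add_mul_div_right _ _ hq3
    simp only [Finset.mem_product, Finset.mem_Icc]
    refine ⟨⟨(hdiv p.1 a hax hxa).1, (hdiv p.1 a hax hxa).2⟩,
      ⟨(hdiv p.2 b hby hyb).1, (hdiv p.2 b hby hyb).2⟩, ?_⟩
    simp only [Dset, Finset.mem_filter, Finset.mem_range]
    refine ⟨Nat.mod_lt _ hq3, ?_⟩
    intro t ht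
    rw [digit_mod p.2 ht]
    intro hy1
    have hx1 : digit 3 t p.1 = 1 := by
      rw [← digit_mod p.1 ht, hprs]
      exact allOnes_digit ht
    exact hS p hpG t ⟨hx1, hy1⟩
  have hinj : Set.InjOn (fun p : ℕ × ℕ => (p.1 / 3 ^ i, (p.2 / 3 ^ i, p.2 % 3 ^ i))) ↑F := by
    intro x hx y hy hxy
    simp only [Finset.mem_coe, hF, Finset.mem_filter] at hx hy
    simp only [Prod.mk.injEq] at hxy
    obtain ⟨h1, h2, h3⟩ := hxy
    have ex := Nat.div_add_mod x.1 (3 ^ i)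
    have ey := Nat.div_add_mod y.1 (3 ^ i)
    have hx2 := hx.2
    have hy2 := hy.2
    have h1' : 3 ^ i * (x.1 / 3 ^ i) = 3 ^ i * (y.1 / 3 ^ i) := by rw [h1]
    have ex2 := Nat.div_add_mod x.2 (3 ^ i)
    have ey2 := Nat.div_add_mod y.2 (3 ^ i)
    have h2' : 3 ^ i * (x.2 / 3 ^ i) = 3 ^ i * (y.2 / 3 ^ i) := by rw [h2]
    exact Prod.ext (by omega) (by omega)
  calc F.card ≤ _ := Finset.card_le_card_of_injOn _ hmem hinj
    _ ≤ 32 * 2 ^ i := by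
      rw [Finset.card_product, Finset.card_product, Nat.card_Icc, Nat.card_Icc]
      have := Dset_card i
      have e : ∀ c : ℕ, c + 3 + 1 - c = 4 := by omega
      rw [e, e]
      nlinarith [Dset_card i]

lemma col_count_snd (i a b : ℕ) (G' : Finset (ℕ × ℕ))
    (hS : ∀ p ∈ G', SierpMem p)
    (hbox : ∀ p ∈ G', a ≤ p.1 ∧ p.1 < a + 3 ^ (i+1) ∧ b ≤ p.2 ∧ p.2 < b + 3 ^ (i+1)) :
    (G'.filter (fun p => p.2 % 3 ^ i = allOnes i)).card ≤ 32 * 2 ^ i := by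
  have hq3 : (0:ℕ) < 3 ^ i := by positivity
  set F := G'.filter (fun p => p.2 % 3 ^ i = allOnes i) with hF
  have hmem : ∀ p ∈ F, (p.2 / 3 ^ i, (p.1 / 3 ^ i, p.1 % 3 ^ i)) ∈
      (Finset.Icc (b / 3 ^ i) (b / 3 ^ i + 3)) ×ˢ
        ((Finset.Icc (a / 3 ^ i) (a / 3 ^ i + 3)) ×ˢ Dset i) := by
    intro p hp
    rw [hF, Finset.mem_filter] at hp
    obtain ⟨hpG, hprs⟩ := hp
    obtain ⟨hax, hxa, hby, hyb⟩ := hbox p hpG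
    have hdiv : ∀ u c : ℕ, c ≤ u → u < c + 3 ^ (i+1) →
        c / 3 ^ i ≤ u / 3 ^ i ∧ u / 3 ^ i ≤ c / 3 ^ i + 3 := by
      intro u c hcu huc
      constructor
      · exact Nat.div_le_div_right hcu
      · calc u / 3 ^ i ≤ (c + 3 * 3 ^ i) / 3 ^ i := by
              apply Nat.div_le_div_right
              rw [pow_succ] at huc; omega
          _ = c / 3 ^ i + 3 := Nat.add_mul_div_right _ _ hq3
    simp only [Finset.mem_product, Finset.mem_Icc]
    refine ⟨⟨(hdiv p.2 b hby hyb).1, (hdiv p.2 b hby hyb).2⟩,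
      ⟨(hdiv p.1 a hax hxa).1, (hdiv p.1 a hax hxa).2⟩, ?_⟩
    simp only [Dset, Finset.mem_filter, Finset.mem_range]
    refine ⟨Nat.mod_lt _ hq3, ?_⟩
    intro t ht
    rw [digit_mod p.1 ht]
    intro hx1
    have hy1 : digit 3 t p.2 = 1 := by
      rw [← digit_mod p.2 ht, hprs]
      exact allOnes_digit ht
    exact hS p hpG t ⟨hx1, hy1⟩
  have hinj : Set.InjOn (fun p : ℕ × ℕ => (p.2 / 3 ^ i, (p.1 / 3 ^ i, p.1 % 3 ^ i))) ↑F := by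
    intro x hx y hy hxy
    simp only [Finset.mem_coe, hF, Finset.mem_filter] at hx hy
    simp only [Prod.mk.injEq] at hxy
    obtain ⟨h1, h2, h3⟩ := hxy
    have ex := Nat.div_add_mod x.2 (3 ^ i)
    have ey := Nat.div_add_mod y.2 (3 ^ i)
    have hx2 := hx.2
    have hy2 := hy.2
    have h1' : 3 ^ i * (x.2 / 3 ^ i) = 3 ^ i * (y.2 / 3 ^ i) := by rw [h1]
    have ex2 := Nat.div_add_mod x.1 (3 ^ i)
    have ey2 := Nat.div_add_mod y.1 (3 ^ i)
    have h2' : 3 ^ i * (x.1 / 3 ^ i) = 3 ^ i * (y.1 / 3 ^ i) := by rw [h2]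
    exact Prod.ext (by omega) (by omega)
  calc F.card ≤ _ := Finset.card_le_card_of_injOn _ hmem hinj
    _ ≤ 32 * 2 ^ i := by
      rw [Finset.card_product, Finset.card_product, Nat.card_Icc, Nat.card_Icc]
      have := Dset_card i
      have e : ∀ c : ℕ, c + 3 + 1 - c = 4 := by omega
      rw [e, e]
      nlinarith [Dset_card i]

def inBox (i a b : ℕ) (p : ℕ × ℕ) : Prop :=
  a ≤ p.1 ∧ p.1 < a + 3 ^ i ∧ b ≤ p.2 ∧ p.2 < b + 3 ^ i

lemma rec_main (i : ℕ) : ∀ (G : Finset (ℕ × ℕ)) (m a b : ℕ),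
    (∀ p ∈ G, SierpMem p) → G.card ≤ m → 2 ≤ m →
    ∃ T : Finset (ℕ × ℕ), T ⊆ G ∧ T.card ≤ Fcost m i ∧
      ∀ A : Finset (ℕ × ℕ), A ⊆ G → (∀ p ∈ A, p ∉ T) →
        (∀ p ∈ A, inBox i a b p) →
        (∀ p ∈ A, ∀ q ∈ A, SierpGraph.ReachIn (↑A) p q) →
        2 * A.card ≤ m := by
  induction i with
  | zero =>
    intro G m a b hS hm hm2
    refine ⟨∅, Finset.empty_subset _, by simp [Fcost], ?_⟩
    intro A hAG hAT hAbox hAconn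
    have hsub : A ⊆ {(a, b)} := by
      intro p hp
      have h := hAbox p hp
      simp only [inBox, pow_zero] at h
      simp only [Finset.mem_singleton]
      have : p = (p.1, p.2) := rfl
      rw [this]
      have e1 : p.1 = a := by omega
      have e2 : p.2 = b := by omega
      rw [e1, e2]
    have := Finset.card_le_card hsub
    simp only [Finset.card_singleton] at this
    omega
  | succ i ih =>
    intro G m a b hS hm hm2
    have hq3 : (0:ℕ) < 3 ^ i := by positivity
    set G' := G.filter (fun p => inBox (i+1) a b p) with hG'def
    have hG'S : ∀ p ∈ G', SierpMem p := by
      intro p hp; exact hS p (Finset.mem_filter.mp hp).1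
    have hG'box : ∀ p ∈ G', a ≤ p.1 ∧ p.1 < a + 3 ^ (i+1) ∧ b ≤ p.2 ∧ p.2 < b + 3 ^ (i+1) := by
      intro p hp; exact (Finset.mem_filter.mp hp).2
    have hG'm : G'.card ≤ m := le_trans (Finset.card_le_card (Finset.filter_subset _ _)) hm
    obtain ⟨r, hr, hrdiv, hrmin⟩ := exists_min_residue (3 ^ i) m hq3 G' hG'm Prod.fst
    obtain ⟨r', hr', hrdiv', hrmin'⟩ := exists_min_residue (3 ^ i) m hq3 G' hG'm Prod.snd
    have hrcol : (G'.filter (fun p => p.1 % 3 ^ i = r)).card ≤ min (32 * 2 ^ i) (m / 3 ^ i) :=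
      le_min (le_trans (hrmin (allOnes i) (allOnes_lt i)) (col_count_fst i a b G' hG'S hG'box))
        hrdiv
    have hrcol' : (G'.filter (fun p => p.2 % 3 ^ i = r')).card ≤ min (32 * 2 ^ i) (m / 3 ^ i) :=
      le_min (le_trans (hrmin' (allOnes i) (allOnes_lt i)) (col_count_snd i a b G' hG'S hG'box))
        hrdiv'
    set Tcut := G'.filter (fun p => p.1 % 3 ^ i = r ∨ p.2 % 3 ^ i = r') with hTcutdef
    have hTcutG : Tcut ⊆ G := le_trans (Finset.filter_subset _ _) (Finset.filter_subset _ _)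
    have hTcutcard : Tcut.card ≤ 2 * min (32 * 2 ^ i) (m / 3 ^ i) := by
      have hsub : Tcut ⊆ (G'.filter (fun p => p.1 % 3 ^ i = r))
          ∪ (G'.filter (fun p => p.2 % 3 ^ i = r')) := by
        intro p hp
        rw [hTcutdef, Finset.mem_filter] at hp
        rcases hp.2 with h | h
        · exact Finset.mem_union_left _ (Finset.mem_filter.mpr ⟨hp.1, h⟩)
        · exact Finset.mem_union_right _ (Finset.mem_filter.mpr ⟨hp.1, h⟩)
      calc Tcut.card ≤ _ := Finset.card_le_card hsub
        _ ≤ _ + _ := Finset.card_union_le _ _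
        _ ≤ 2 * min (32 * 2 ^ i) (m / 3 ^ i) := by omega
    have hFcost : Fcost m (i+1) = Fcost m i + 2 * min (32 * 2 ^ i) (m / 3 ^ i) :=
      Finset.sum_range_succ _ _
    -- the candidate sub-boxes
    set boxP : ℕ → ℕ → ℕ × ℕ → Prop := fun w w' p =>
      (w * 3 ^ i + r - 3 ^ i ≤ p.1 ∧ p.1 < w * 3 ^ i + r) ∧
      (w' * 3 ^ i + r' - 3 ^ i ≤ p.2 ∧ p.2 < w' * 3 ^ i + r') with hboxPdef
    -- at most one heavy sub-box
    have htwo : ∀ w1 w1' w2 w2', ¬(w1 = w2 ∧ w1' = w2') →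
        m < 2 * (G.filter (fun p => boxP w1 w1' p)).card →
        m < 2 * (G.filter (fun p => boxP w2 w2' p)).card → False := by
      intro w1 w1' w2 w2' hne h1 h2
      have hdisj : Disjoint (G.filter (fun p => boxP w1 w1' p))
          (G.filter (fun p => boxP w2 w2' p)) := by
        rw [Finset.disjoint_left]
        intro p hp1 hp2
        rw [Finset.mem_filter] at hp1 hp2
        obtain ⟨-, ⟨hx1, hx2⟩, hy1, hy2⟩ := hp1
        obtain ⟨-, ⟨hx3, hx4⟩, hy3, hy4⟩ := hp2
        rcases Nat.lt_trichotomy w1 w2 with h | h | h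
        · exact piece_disjoint hr h hx2 hx3
        · rcases Nat.lt_trichotomy w1' w2' with h' | h' | h'
          · exact piece_disjoint hr' h' hy2 hy3
          · exact hne ⟨h, h'⟩
          · exact piece_disjoint hr' h' hy4 hy1
        · exact piece_disjoint hr h hx4 hx1
      have hcard := Finset.card_union_of_disjoint hdisj
      have hsubG : (G.filter (fun p => boxP w1 w1' p)) ∪ (G.filter (fun p => boxP w2 w2' p)) ⊆ G :=
        Finset.union_subset (Finset.filter_subset _ _) (Finset.filter_subset _ _)
      have := Finset.card_le_card hsubG
      omega
    -- key: any connected A inside the big box avoiding Tcut lies in one sub-box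
    have hkey : ∀ (Tbig : Finset (ℕ × ℕ)), Tcut ⊆ Tbig →
        ∀ A : Finset (ℕ × ℕ), A ⊆ G → (∀ p ∈ A, p ∉ Tbig) →
        (∀ p ∈ A, inBox (i+1) a b p) →
        (∀ p ∈ A, ∀ q ∈ A, SierpGraph.ReachIn (↑A) p q) →
        ∀ p ∈ A, ∀ z ∈ A, boxP (pieceIdx (3 ^ i) r p.1) (pieceIdx (3 ^ i) r' p.2) z := by
      intro Tbig hTb A hAG hAT hAbox hAconn p hp z hz
      have havoidx : ∀ u ∈ A, u.1 % 3 ^ i ≠ r := by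
        intro u hu hur
        refine hAT u hu (hTb ?_)
        rw [hTcutdef, Finset.mem_filter]
        exact ⟨Finset.mem_filter.mpr ⟨hAG hu, hAbox u hu⟩, Or.inl hur⟩
      have havoidy : ∀ u ∈ A, u.2 % 3 ^ i ≠ r' := by
        intro u hu hur
        refine hAT u hu (hTb ?_)
        rw [hTcutdef, Finset.mem_filter]
        exact ⟨Finset.mem_filter.mpr ⟨hAG hu, hAbox u hu⟩, Or.inr hur⟩
      have hsamex : pieceIdx (3 ^ i) r z.1 = pieceIdx (3 ^ i) r p.1 := by
        by_contra hne
        rcases le_total z.1 p.1 with hle | hle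
        · obtain ⟨c, hc1, hc2, hc3⟩ := piece_between hq3 hr hle hne
          obtain ⟨u, huA, hu1⟩ := reachIn_cross_fst (hAconn z hz p hp) (le_of_lt hc1) hc2
          exact havoidx u (Finset.mem_coe.mp huA) (by rw [hu1]; exact hc3)
        · obtain ⟨c, hc1, hc2, hc3⟩ := piece_between hq3 hr hle (Ne.symm hne)
          obtain ⟨u, huA, hu1⟩ := reachIn_cross_fst (hAconn p hp z hz) (le_of_lt hc1) hc2
          exact havoidx u (Finset.mem_coe.mp huA) (by rw [hu1]; exact hc3)
      have hsamey : pieceIdx (3 ^ i) r' z.2 = pieceIdx (3 ^ i) r' p.2 := by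
        by_contra hne
        rcases le_total z.2 p.2 with hle | hle
        · obtain ⟨c, hc1, hc2, hc3⟩ := piece_between hq3 hr' hle hne
          obtain ⟨u, huA, hu1⟩ := reachIn_cross_snd (hAconn z hz p hp) (le_of_lt hc1) hc2
          exact havoidy u (Finset.mem_coe.mp huA) (by rw [hu1]; exact hc3)
        · obtain ⟨c, hc1, hc2, hc3⟩ := piece_between hq3 hr' hle (Ne.symm hne)
          obtain ⟨u, huA, hu1⟩ := reachIn_cross_snd (hAconn p hp z hz) (le_of_lt hc1) hc2
          exact havoidy u (Finset.mem_coe.mp huA) (by rw [hu1]; exact hc3)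
      exact ⟨piece_mem hq3 hr hsamex, piece_mem hq3 hr' hsamey⟩
    -- boxP implies inBox at scale i
    have hboxP_inBox : ∀ w w' z, boxP w w' z →
        inBox i (w * 3 ^ i + r - 3 ^ i) (w' * 3 ^ i + r' - 3 ^ i) z := by
      intro w w' z hz
      obtain ⟨⟨hx1, hx2⟩, hy1, hy2⟩ := hz
      refine ⟨hx1, ?_, hy1, ?_⟩
      · generalize w * 3 ^ i = W at hx1 hx2 ⊢
        omega
      · generalize w' * 3 ^ i = W at hy1 hy2 ⊢
        omega
    by_cases hheavy : ∃ w w', m < 2 * (G.filter (fun p => boxP w w' p)).card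
    · obtain ⟨w₀, w₀', hw₀⟩ := hheavy
      obtain ⟨T₂, hT₂G, hT₂c, hT₂A⟩ :=
        ih G m (w₀ * 3 ^ i + r - 3 ^ i) (w₀' * 3 ^ i + r' - 3 ^ i) hS hm hm2
      refine ⟨Tcut ∪ T₂, Finset.union_subset hTcutG hT₂G, ?_, ?_⟩
      · calc (Tcut ∪ T₂).card ≤ Tcut.card + T₂.card := Finset.card_union_le _ _
          _ ≤ Fcost m (i+1) := by omega
      · intro A hAG hAT hAbox hAconn
        rcases A.eq_empty_or_nonempty with rfl | ⟨p, hp⟩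
        · simp
        have hAT' : ∀ u ∈ A, u ∉ Tcut ∪ T₂ := hAT
        have hpiece := hkey (Tcut ∪ T₂) Finset.subset_union_left A hAG hAT hAbox hAconn p hp
        set wA := pieceIdx (3 ^ i) r p.1 with hwA
        set wA' := pieceIdx (3 ^ i) r' p.2 with hwA'
        by_cases hsame : wA = w₀ ∧ wA' = w₀'
        · -- A is in the heavy box: use the recursive cut
          apply hT₂A A hAG
          · intro u hu hmem
            exact hAT u hu (Finset.mem_union_right _ hmem)
          · intro u hu
            have := hboxP_inBox wA wA' u (hpiece u hu)
            rw [hsame.1, hsame.2] at this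
            exact this
          · exact hAconn
        · -- A is in a light box
          have hlight : 2 * (G.filter (fun p => boxP wA wA' p)).card ≤ m := by
            by_contra hbig
            push_neg at hbig
            exact htwo wA wA' w₀ w₀' hsame hbig hw₀
          have hsubA : A ⊆ G.filter (fun p => boxP wA wA' p) := by
            intro u hu
            exact Finset.mem_filter.mpr ⟨hAG hu, hpiece u hu⟩
          have := Finset.card_le_card hsubA
          omega
    · push_neg at hheavy
      refine ⟨Tcut, hTcutG, ?_, ?_⟩
      · calc Tcut.card ≤ 2 * min (32 * 2 ^ i) (m / 3 ^ i) := hTcutcard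
          _ ≤ Fcost m (i+1) := by omega
      · intro A hAG hAT hAbox hAconn
        rcases A.eq_empty_or_nonempty with rfl | ⟨p, hp⟩
        · simp
        have hpiece := hkey Tcut (le_refl _) A hAG hAT hAbox hAconn p hp
        set wA := pieceIdx (3 ^ i) r p.1 with hwA
        set wA' := pieceIdx (3 ^ i) r' p.2 with hwA'
        have hlight := hheavy wA wA'
        have hsubA : A ⊆ G.filter (fun p => boxP wA wA' p) := by
          intro u hu
          exact Finset.mem_filter.mpr ⟨hAG hu, hpiece u hu⟩
        have := Finset.card_le_card hsubA
        omega

lemma inst_eq :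
    (fun (a b : ℕ × ℕ) => Classical.propDecidable (a = b)) = (fun a b => instDecidableEqProd a b) :=
  Subsingleton.elim _ _

lemma cutHalf_le_of {V : Type*} (X : SimpleGraph V) (G T : Finset V)
    (h : IsHalfCutSet X G T) : cutHalf X G ≤ T.card :=
  Nat.sInf_le ⟨T, h, rfl⟩

lemma compIn_empty {V : Type*} (X : SimpleGraph V) (v : V) :
    X.compIn (∅ : Set V) v = ∅ := by
  ext w
  simp only [SimpleGraph.compIn, SimpleGraph.ReachIn, Set.mem_setOf_eq, Set.mem_empty_iff_false,
    iff_false]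
  rintro ⟨h, -⟩
  exact h

lemma cutHalf_le_card {V : Type*} (X : SimpleGraph V) (G : Finset V) :
    cutHalf X G ≤ G.card := by
  apply cutHalf_le_of
  refine ⟨Finset.Subset.refl _, ?_⟩
  intro v
  rw [Finset.sdiff_self, Finset.coe_empty, compIn_empty]
  simp

lemma cut_bound (G : Finset (ℕ × ℕ)) (hS : ∀ p ∈ G, SierpMem p) (hm2 : 2 ≤ G.card) :
    cutHalf SierpGraph G ≤ 68 * 2 ^ (Nat.log 6 G.card + 1) := by
  set m := G.card with hmdef
  by_cases hall : ∀ v, 2 * (SierpGraph.compIn (↑G) v).ncard ≤ G.card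
  · have h0 : cutHalf SierpGraph G ≤ (∅ : Finset (ℕ × ℕ)).card := by
      apply cutHalf_le_of
      refine ⟨Finset.empty_subset _, ?_⟩
      intro v
      have e : G \ (∅ : Finset (ℕ × ℕ)) = G := Finset.sdiff_empty
      convert hall v
      exact e
    simp only [Finset.card_empty] at h0
    omega
  · push_neg at hall
    obtain ⟨v₀, hv₀⟩ := hall
    set K := SierpGraph.compIn (↑G) v₀ with hKdef
    have hKsub : K ⊆ ↑G := SimpleGraph.compIn_subset _ _ _
    have hKfin : K.Finite := G.finite_toSet.subset hKsub
    have hKcard : K.ncard ≤ m := by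
      have := Set.ncard_le_ncard hKsub G.finite_toSet
      rwa [Set.ncard_coe_finset] at this
    have hKne : K.Nonempty := by
      rw [← Set.ncard_pos hKfin]
      omega
    set KF := hKfin.toFinset with hKFdef
    have hKFK : (↑KF : Set (ℕ × ℕ)) = K := hKfin.coe_toFinset
    have hKFcard : KF.card = K.ncard := (Set.ncard_eq_toFinset_card K hKfin).symm
    have hKFne : KF.Nonempty := by
      rw [← Finset.coe_nonempty, hKFK]; exact hKne
    -- bounding box for K
    have hspread : ∀ (proj : ℕ × ℕ → ℕ),
        (∀ (z1 z2 : ℕ × ℕ), z1 ∈ K → z2 ∈ K → ∀ c, proj z1 ≤ c → c ≤ proj z2 →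
          ∃ z ∈ K, proj z = c) →
        ∀ p ∈ K, (KF.image proj).min' (hKFne.image _) ≤ proj p ∧
          proj p < (KF.image proj).min' (hKFne.image _) + 3 ^ m := by
      intro proj hcross p hpK
      set aK := (KF.image proj).min' (hKFne.image _) with haK
      have hpKF : p ∈ KF := by rw [← hKFK] at hpK; exact hpK
      have hle : aK ≤ proj p := Finset.min'_le _ _ (Finset.mem_image_of_mem _ hpKF)
      obtain ⟨p₀, hp₀KF, hp₀1⟩ := Finset.mem_image.mp ((KF.image proj).min'_mem (hKFne.image _))
      have hp₀K : p₀ ∈ K := by rw [← hKFK]; exact hp₀KF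
      have hIcc : Finset.Icc aK (proj p) ⊆ KF.image proj := by
        intro c hc
        rw [Finset.mem_Icc] at hc
        obtain ⟨z, hzK, hz1⟩ := hcross p₀ p hp₀K hpK c (by omega) hc.2
        have : z ∈ KF := by rw [← hKFK] at hzK; exact hzK
        exact Finset.mem_image.mpr ⟨z, this, hz1⟩
      have hcard := Finset.card_le_card hIcc
      rw [Nat.card_Icc] at hcard
      have himcard : (KF.image proj).card ≤ m := le_trans (Finset.card_image_le) (by omega)
      have hpow : m < 3 ^ m := Nat.lt_pow_self (by norm_num)
      omega
    have hcrossx : ∀ (z1 z2 : ℕ × ℕ), z1 ∈ K → z2 ∈ K → ∀ c, z1.1 ≤ c → c ≤ z2.1 →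
        ∃ z ∈ K, z.1 = c := by
      intro z1 z2 h1 h2 c hc1 hc2
      exact reachIn_cross_fst (SimpleGraph.compIn_reachIn h1 h2) hc1 hc2
    have hcrossy : ∀ (z1 z2 : ℕ × ℕ), z1 ∈ K → z2 ∈ K → ∀ c, z1.2 ≤ c → c ≤ z2.2 →
        ∃ z ∈ K, z.2 = c := by
      intro z1 z2 h1 h2 c hc1 hc2
      exact reachIn_cross_snd (SimpleGraph.compIn_reachIn h1 h2) hc1 hc2
    set a := (KF.image Prod.fst).min' (hKFne.image _) with hadef
    set b := (KF.image Prod.snd).min' (hKFne.image _) with hbdef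
    have hboxK : ∀ p ∈ K, inBox m a b p := by
      intro p hpK
      obtain ⟨h1, h2⟩ := hspread Prod.fst hcrossx p hpK
      obtain ⟨h3, h4⟩ := hspread Prod.snd hcrossy p hpK
      exact ⟨h1, h2, h3, h4⟩
    obtain ⟨T, hTG, hTc, hTA⟩ := rec_main m G m a b hS le_rfl hm2
    have hhalf : IsHalfCutSet SierpGraph G T := by
      refine ⟨hTG, ?_⟩
      intro v
      set s := (↑(G \ T) : Set (ℕ × ℕ)) with hsdef
      have hs_sub : s ⊆ ↑G := by
        rw [hsdef, Finset.coe_sdiff]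
        exact Set.diff_subset
      set Av := SierpGraph.compIn s v with hAvdef
      have hAvs : Av ⊆ s := SimpleGraph.compIn_subset _ _ _
      have hAvG : Av ⊆ ↑G := hAvs.trans hs_sub
      have hAvfin : Av.Finite := G.finite_toSet.subset hAvG
      by_cases hKv : 2 * (SierpGraph.compIn (↑G) v).ncard ≤ G.card
      · have hmono : Av ⊆ SierpGraph.compIn (↑G) v := SimpleGraph.compIn_mono hs_sub v
        have hfin2 : (SierpGraph.compIn (↑G) v).Finite :=
          G.finite_toSet.subset (SimpleGraph.compIn_subset _ _ _)
        have h5 := Set.ncard_le_ncard hmono hfin2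
        have hgoal : 2 * Av.ncard ≤ G.card := by omega
        rw [hAvdef, hsdef] at hgoal
        convert hgoal
      · -- the component of v in G is the heavy one, K
        set Kv := SierpGraph.compIn (↑G) v with hKvdef
        have hKvsub : Kv ⊆ ↑G := SimpleGraph.compIn_subset _ _ _
        have hKvfin : Kv.Finite := G.finite_toSet.subset hKvsub
        have hKvK : Kv = K := by
          have hnd : ¬ Disjoint K Kv := by
            intro hd
            have hu : (K ∪ Kv).ncard = K.ncard + Kv.ncard :=
              Set.ncard_union_eq hd hKfin hKvfin
            have husub : K ∪ Kv ⊆ ↑G := Set.union_subset hKsub hKvsub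
            have := Set.ncard_le_ncard husub G.finite_toSet
            rw [Set.ncard_coe_finset] at this
            omega
          obtain ⟨z, hzK, hzKv⟩ := Set.not_disjoint_iff.mp hnd
          rw [hKdef] at hzK
          rw [hKvdef] at hzKv
          rw [hKvdef, hKdef, SimpleGraph.compIn_eq_of_mem hzKv,
            SimpleGraph.compIn_eq_of_mem hzK]
        have hAvK : Av ⊆ K := by
          rw [← hKvK]
          exact SimpleGraph.compIn_mono hs_sub v
        set AF := hAvfin.toFinset with hAFdef
        have hAFAv : (↑AF : Set (ℕ × ℕ)) = Av := hAvfin.coe_toFinset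
        have hAFcard : AF.card = Av.ncard := (Set.ncard_eq_toFinset_card Av hAvfin).symm
        have hres : 2 * AF.card ≤ m := by
          apply hTA AF
          · intro u hu
            rw [hAFdef, Set.Finite.mem_toFinset] at hu
            exact Finset.mem_coe.mp (hAvG hu)
          · intro u hu
            rw [hAFdef, Set.Finite.mem_toFinset] at hu
            have := hAvs hu
            rw [hsdef, Finset.coe_sdiff] at this
            exact fun hT => this.2 (Finset.mem_coe.mpr hT)
          · intro u hu
            rw [hAFdef, Set.Finite.mem_toFinset] at hu
            exact hboxK u (hAvK hu)
          · intro u hu q hq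
            rw [hAFdef, Set.Finite.mem_toFinset] at hu hq
            have : SierpGraph.ReachIn Av u q := SimpleGraph.compIn_reachIn hu hq
            rwa [← hAFAv] at this
        have hgoal : 2 * Av.ncard ≤ G.card := by omega
        rw [hAvdef, hsdef] at hgoal
        convert hgoal
    calc cutHalf SierpGraph G ≤ T.card := cutHalf_le_of _ _ _ hhalf
      _ ≤ Fcost m m := hTc
      _ ≤ 68 * 2 ^ (Nat.log 6 m + 1) :=
          Fcost_le m m _ (Nat.lt_pow_succ_log_self (by norm_num) m)

lemma sep_nat_bound (n : ℕ) :
    sepHalf SierpGraph {p : ℕ × ℕ | SierpMem p} n ≤ 68 * 2 ^ (Nat.log 6 n + 1) + 1 := by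
  apply csSup_le
  · exact ⟨cutHalf SierpGraph (∅ : Finset (ℕ × ℕ)), ⟨∅, by simp, by simp, rfl⟩⟩
  · rintro c ⟨G, hGW, hGn, rfl⟩
    by_cases h2 : 2 ≤ G.card
    · have h := cut_bound G (fun p hp => hGW hp) h2
      have hmono : Nat.log 6 G.card ≤ Nat.log 6 n := Nat.log_mono_right hGn
      have : (2:ℕ) ^ (Nat.log 6 G.card + 1) ≤ 2 ^ (Nat.log 6 n + 1) :=
        Nat.pow_le_pow_right (by norm_num) (by omega)
      omega
    · have := cutHalf_le_card SierpGraph G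
      omega


/-- Upper bound on the separation profile of the infinite Sierpinski graph:
`sep¹ᐟ²_S(n) ≼ n^(log 2 / log 6)`. -/
theorem sierpinski_sep_upper :
    ∃ C : ℝ, 0 < C ∧ ∀ n : ℕ, 1 ≤ n →
      (sepHalf SierpGraph {p : ℕ × ℕ | SierpMem p} n : ℝ) ≤
        C * (n : ℝ) ^ (Real.log 2 / Real.log 6) := by
  refine ⟨274, by norm_num, ?_⟩
  intro n hn
  set α := Real.log 2 / Real.log 6 with hα
  have hα0 : 0 ≤ α := div_nonneg (Real.log_nonneg (by norm_num)) (Real.log_nonneg (by norm_num))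
  have h6α : (6:ℝ) ^ α = 2 := by
    rw [hα]
    rw [Real.rpow_def_of_pos (by norm_num : (0:ℝ) < 6)]
    have hlog6 : Real.log 6 ≠ 0 := by
      have := Real.log_pos (by norm_num : (1:ℝ) < 6)
      linarith
    have he : Real.log 6 * (Real.log 2 / Real.log 6) = Real.log 2 := by
      field_simp
    rw [he, Real.exp_log (by norm_num)]
  set L := Nat.log 6 n with hL
  have h6L : (6:ℕ) ^ L ≤ n := Nat.pow_log_le_self 6 (by omega)
  have hkey : ((2:ℝ)) ^ L ≤ (n : ℝ) ^ α := by
    have h1 : ((6:ℝ) ^ L) ^ α ≤ (n : ℝ) ^ α := by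
      apply Real.rpow_le_rpow (by positivity) _ hα0
      exact_mod_cast h6L
    have h2 : ((6:ℝ) ^ L) ^ α = (2:ℝ) ^ L := by
      rw [← Real.rpow_natCast (6:ℝ) L, ← Real.rpow_mul (by norm_num), mul_comm,
        Real.rpow_mul (by norm_num), h6α, Real.rpow_natCast]
    rwa [h2] at h1
  have hone : (1:ℝ) ≤ (n : ℝ) ^ α := by
    have : ((1:ℝ)) ^ α ≤ (n : ℝ) ^ α := by
      apply Real.rpow_le_rpow (by norm_num) _ hα0
      exact_mod_cast hn
    rwa [Real.one_rpow] at this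
  have hnat := sep_nat_bound n
  have hcast : (sepHalf SierpGraph {p : ℕ × ℕ | SierpMem p} n : ℝ)
      ≤ 68 * 2 ^ (L + 1) + 1 := by
    exact_mod_cast hnat
  calc (sepHalf SierpGraph {p : ℕ × ℕ | SierpMem p} n : ℝ)
      ≤ 68 * 2 ^ (L + 1) + 1 := hcast
    _ = 136 * 2 ^ L + 1 := by ring
    _ ≤ 136 * ((n:ℝ) ^ α) + 1 := by linarith [hkey]
    _ ≤ 274 * (n : ℝ) ^ α := by linarith [hone]
end
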